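/- arXiv:1506.06901 — 3 statements merged into one kernel-verified Lean document; each statement's English description precedes it below -/
import Mathlib

section
/- Let 1 < p < ∞, σ a locally finite Borel measure on ℝⁿ, and 𝓕 a collection of dyadic cubes satisfying the σ-Carleson condition ∑_{Q ∈ 𝓕, Q ⊆ P} σ(Q) ≤ 2σ(P) for all P ∈ 𝓕. Then for every nonnegative f ∈ L^p(σ), (∑_{F ∈ 𝓕} (⟨f⟩_F^σ)^p σ(F))^{1/p} ≤ C(p) ‖f‖_{L^p(σ)}, where ⟨f⟩_F^σ = (1/σ(F)) ∫_F f dσ when σ(F) > 0 (and the term is taken to be 0 when σ(F) = 0). -/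
open MeasureTheory ENNReal
open scoped Classical

noncomputable section

def DyadicCube (n : ℕ) (k : ℤ) (j : Fin n → ℤ) : Set (Fin n → ℝ) :=
  {x | ∀ i, (j i : ℝ) / 2 ^ k ≤ x i ∧ x i < ((j i : ℝ) + 1) / 2 ^ k}

def IsDyadicCube {n : ℕ} (Q : Set (Fin n → ℝ)) : Prop :=
  ∃ k j, Q = DyadicCube n k j

lemma two_zpow_pos (k : ℤ) : (0:ℝ) < 2 ^ k := zpow_pos (by norm_num) k

/-- 1-D dyadic interval dichotomy helper. -/
lemma dyadic_interval_subset {k k' : ℤ} (hk : k' ≤ k) {a b : ℤ} {x : ℝ}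
    (h1 : (a : ℝ) / 2 ^ k ≤ x) (h2 : x < ((a : ℝ) + 1) / 2 ^ k)
    (h3 : (b : ℝ) / 2 ^ k' ≤ x) (h4 : x < ((b : ℝ) + 1) / 2 ^ k') :
    ∀ y : ℝ, (a : ℝ) / 2 ^ k ≤ y → y < ((a : ℝ) + 1) / 2 ^ k →
      (b : ℝ) / 2 ^ k' ≤ y ∧ y < ((b : ℝ) + 1) / 2 ^ k' := by
  set d : ℕ := (k - k').toNat with hd
  have hkd : k = k' + d := by simp [hd]; omega
  have h2k : (2:ℝ) ^ k = 2 ^ k' * 2 ^ (d:ℤ) := by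
    rw [hkd, zpow_add₀ (by norm_num : (2:ℝ) ≠ 0)]
  set m : ℤ := b * 2 ^ d with hm
  have hmc : ((m : ℝ)) = (b:ℝ) * 2 ^ d := by push_cast [hm]; ring
  have hb1 : (b : ℝ) / 2 ^ k' = (m : ℝ) / 2 ^ k := by
    rw [hmc, h2k]; rw [zpow_natCast]; field_simp
  have hb2 : ((b : ℝ) + 1) / 2 ^ k' = ((m : ℝ) + 2 ^ d) / 2 ^ k := by
    rw [hmc, h2k]; rw [zpow_natCast]; field_simp
  -- translate membership to integer inequalities on x * 2^k
  have hkpos := two_zpow_pos k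
  have hxa1 : (a:ℝ) ≤ x * 2 ^ k := by rwa [div_le_iff₀ hkpos] at h1
  have hxa2 : x * 2 ^ k < (a:ℝ) + 1 := by rwa [lt_div_iff₀ hkpos] at h2
  have hxb1 : (m:ℝ) ≤ x * 2 ^ k := by rw [hb1] at h3; rwa [div_le_iff₀ hkpos] at h3
  have hxb2 : x * 2 ^ k < (m:ℝ) + 2 ^ d := by rw [hb2] at h4; rwa [lt_div_iff₀ hkpos] at h4
  have hma : m ≤ a := by
    have : (m:ℝ) < (a:ℝ) + 1 := lt_of_le_of_lt hxb1 hxa2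
    exact_mod_cast Int.lt_add_one_iff.mp (by exact_mod_cast this)
  have ham : a + 1 ≤ m + 2 ^ d := by
    have : (a:ℝ) < (m:ℝ) + 2 ^ d := lt_of_le_of_lt hxa1 hxb2
    have : (a:ℤ) < m + 2 ^ d := by exact_mod_cast this
    omega
  intro y hy1 hy2
  rw [div_le_iff₀ hkpos] at hy1
  rw [lt_div_iff₀ hkpos] at hy2
  constructor
  · rw [hb1, div_le_iff₀ hkpos]
    calc (m:ℝ) ≤ (a:ℝ) := by exact_mod_cast hma
    _ ≤ y * 2 ^ k := hy1
  · rw [hb2, lt_div_iff₀ hkpos]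
    calc y * 2 ^ k < (a:ℝ) + 1 := hy2
    _ ≤ (m:ℝ) + 2 ^ d := by
        have : ((a:ℝ) + 1) ≤ ((m + 2 ^ d : ℤ) : ℝ) := by exact_mod_cast ham
        push_cast at this; linarith

lemma dyadicCube_subset_of_inter {n : ℕ} {k k' : ℤ} {j j' : Fin n → ℤ} (hk : k' ≤ k)
    {x : Fin n → ℝ} (hx : x ∈ DyadicCube n k j) (hx' : x ∈ DyadicCube n k' j') :
    DyadicCube n k j ⊆ DyadicCube n k' j' := by
  intro y hy i
  exact dyadic_interval_subset hk (hx i).1 (hx i).2 (hx' i).1 (hx' i).2 (y i) (hy i).1 (hy i).2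

lemma isDyadicCube_subset_or {n : ℕ} {Q Q' : Set (Fin n → ℝ)}
    (hQ : IsDyadicCube Q) (hQ' : IsDyadicCube Q') (h : (Q ∩ Q').Nonempty) :
    Q ⊆ Q' ∨ Q' ⊆ Q := by
  obtain ⟨k, j, rfl⟩ := hQ
  obtain ⟨k', j', rfl⟩ := hQ'
  obtain ⟨x, hx, hx'⟩ := h
  rcases le_total k' k with hk | hk
  · exact Or.inl (dyadicCube_subset_of_inter hk hx hx')
  · exact Or.inr (dyadicCube_subset_of_inter hk hx' hx)

lemma dyadicCube_nonempty {n : ℕ} (k : ℤ) (j : Fin n → ℤ) : (DyadicCube n k j).Nonempty := by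
  refine ⟨fun i => (j i : ℝ) / 2 ^ k, fun i => ⟨le_refl _, ?_⟩⟩
  have := two_zpow_pos k
  rw [div_lt_div_iff_of_pos_right this]
  linarith

lemma dyadicCube_eq_pi {n : ℕ} (k : ℤ) (j : Fin n → ℤ) :
    DyadicCube n k j = Set.pi Set.univ (fun i => Set.Ico ((j i : ℝ) / 2 ^ k) (((j i : ℝ) + 1) / 2 ^ k)) := by
  ext x; simp [DyadicCube, Set.mem_pi, Set.mem_Ico]

lemma isDyadicCube_measurableSet {n : ℕ} {Q : Set (Fin n → ℝ)} (hQ : IsDyadicCube Q) :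
    MeasurableSet Q := by
  obtain ⟨k, j, rfl⟩ := hQ
  rw [dyadicCube_eq_pi]
  exact MeasurableSet.univ_pi (fun i => measurableSet_Ico)

lemma isDyadicCube_measure_lt_top {n : ℕ} {σ : Measure (Fin n → ℝ)}
    [IsLocallyFiniteMeasure σ] {Q : Set (Fin n → ℝ)} (hQ : IsDyadicCube Q) : σ Q < ∞ := by
  obtain ⟨k, j, rfl⟩ := hQ
  have hsub : DyadicCube n k j ⊆ Set.pi Set.univ
      (fun i => Set.Icc ((j i : ℝ) / 2 ^ k) (((j i : ℝ) + 1) / 2 ^ k)) := by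
    rw [dyadicCube_eq_pi]
    exact Set.pi_mono (fun i _ => Set.Ico_subset_Icc_self)
  have hcomp : IsCompact (Set.pi Set.univ
      (fun i : Fin n => Set.Icc ((j i : ℝ) / 2 ^ k) (((j i : ℝ) + 1) / 2 ^ k))) :=
    isCompact_univ_pi (fun i => isCompact_Icc)
  exact lt_of_le_of_lt (measure_mono hsub) hcomp.measure_lt_top

variable {n : ℕ}

def avg (σ : Measure (Fin n → ℝ)) (f : (Fin n → ℝ) → ℝ≥0∞) (F : Set (Fin n → ℝ)) : ℝ≥0∞ :=
  if σ F = 0 then 0 else (∫⁻ x in F, f x ∂σ) / σ F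

/-- maximal elements selection -/
lemma maximal_decomp {𝓕 : Set (Set (Fin n → ℝ))} (h𝓕 : ∀ F ∈ 𝓕, IsDyadicCube F)
    (G : Finset ↥𝓕) :
    ∃ M : Finset ↥𝓕, M ⊆ G ∧ (∀ F ∈ G, ∃ F' ∈ M, F.1 ⊆ F'.1) ∧
      (M : Set ↥𝓕).PairwiseDisjoint (fun F => F.1) := by
  refine ⟨G.filter (fun F => ∀ F' ∈ G, F.1 ⊆ F'.1 → F = F'), Finset.filter_subset _ _, ?_, ?_⟩
  · intro F hF
    set s' := G.filter (fun F' => F.1 ⊆ F'.1) with hs'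
    have hFs' : F ∈ s' := by simp [hs', hF]
    obtain ⟨a, ha, hamax⟩ := Set.Finite.exists_maximalFor (fun F : ↥𝓕 => F.1)
      (s' : Set ↥𝓕) s'.finite_toSet ⟨F, hFs'⟩
    simp only [Finset.mem_coe, hs', Finset.mem_filter] at ha
    refine ⟨a, ?_, ha.2⟩
    simp only [Finset.mem_filter]
    refine ⟨ha.1, fun F' hF' hsub => ?_⟩
    have hF's' : F' ∈ s' := by
      simp only [hs', Finset.mem_filter]
      exact ⟨hF', ha.2.trans hsub⟩
    exact Subtype.ext (Set.Subset.antisymm hsub (hamax hF's' hsub))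
  · intro F hF F' hF' hne
    simp only [Finset.coe_filter, Set.mem_setOf_eq] at hF hF'
    rw [Function.onFun, Set.disjoint_iff_inter_eq_empty]
    by_contra hcon
    obtain ⟨x, hx⟩ := Set.nonempty_iff_ne_empty.mpr hcon
    rcases isDyadicCube_subset_or (h𝓕 _ F.2) (h𝓕 _ F'.2) ⟨x, hx⟩ with h | h
    · exact hne (hF.2 F' hF'.1 h)
    · exact hne ((hF'.2 F hF.1 h).symm)

/-- Core weak-type estimate with Carleson condition. -/
lemma core_estimate {σ : Measure (Fin n → ℝ)} [IsLocallyFiniteMeasure σ]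
    {𝓕 : Set (Set (Fin n → ℝ))} (h𝓕 : ∀ F ∈ 𝓕, IsDyadicCube F)
    (hC : ∀ P ∈ 𝓕, ∑' Q : {Q // Q ∈ 𝓕 ∧ Q ⊆ P}, σ Q.1 ≤ 2 * σ P)
    {f : (Fin n → ℝ) → ℝ≥0∞} (hf : Measurable f)
    (s : Finset ↥𝓕) {lam : ℝ≥0∞} (hl0 : lam ≠ 0) (hlt : lam ≠ ∞) :
    ∑ F ∈ s.filter (fun F => lam < avg σ f F.1), σ F.1
      ≤ 4 * lam⁻¹ * ∫⁻ x, Set.indicator {x | lam / 2 < f x} f x ∂σ := by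
  set g : (Fin n → ℝ) → ℝ≥0∞ := Set.indicator {x | lam / 2 < f x} f with hg
  have hgmeas : Measurable g := hf.indicator (hf measurableSet_Ioi)
  set G := s.filter (fun F => lam < avg σ f F.1) with hGdef
  obtain ⟨M, hMG, hMmax, hMdisj⟩ := maximal_decomp h𝓕 G
  -- facts about members of G
  have hGavg : ∀ F ∈ G, lam < avg σ f F.1 := by
    intro F hF; rw [hGdef] at hF; exact (Finset.mem_filter.mp hF).2
  have hG0 : ∀ F ∈ G, σ F.1 ≠ 0 := by
    intro F hF hzero
    have := hGavg F hF
    rw [avg, if_pos hzero] at this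
    exact (not_lt_of_ge zero_le) (lt_of_le_of_lt zero_le this)
  have hGtop : ∀ F : ↥𝓕, σ F.1 ≠ ∞ := fun F =>
    (isDyadicCube_measure_lt_top (h𝓕 _ F.2)).ne
  -- step 1: grouping, Carleson
  have step1 : ∑ F ∈ G, σ F.1 ≤ ∑ F' ∈ M, 2 * σ F'.1 := by
    have hr : ∀ F : ↥𝓕, ∃ F' : ↥𝓕, F ∈ G → (F' ∈ M ∧ F.1 ⊆ F'.1) := by
      intro F
      by_cases h : F ∈ G
      · obtain ⟨F', hF'M, hsub⟩ := hMmax F h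
        exact ⟨F', fun _ => ⟨hF'M, hsub⟩⟩
      · exact ⟨F, fun hc => absurd hc h⟩
    choose r hrspec using hr
    have hmaps : ∀ F ∈ G, r F ∈ M := fun F hF => (hrspec F hF).1
    rw [← Finset.sum_fiberwise_of_maps_to hmaps (fun F => σ F.1)]
    refine Finset.sum_le_sum (fun F' hF' => ?_)
    -- inner sum over fiber ≤ Carleson sum
    set T := {Q // Q ∈ 𝓕 ∧ Q ⊆ F'.1}
    have hinner : ∑ F ∈ G.filter (fun F => r F = F'), σ F.1 ≤ ∑' Q : T, σ Q.1 := by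
      set e : ↥𝓕 → T := fun F =>
        if h : F.1 ⊆ F'.1 then ⟨F.1, F.2, h⟩ else ⟨F'.1, F'.2, subset_rfl⟩ with he
      have hsubs : ∀ F ∈ G.filter (fun F => r F = F'), F.1 ⊆ F'.1 := by
        intro F hF
        rw [Finset.mem_filter] at hF
        have := (hrspec F hF.1).2
        rwa [hF.2] at this
      have heq : ∑ F ∈ G.filter (fun F => r F = F'), σ F.1
          = ∑ Q ∈ (G.filter (fun F => r F = F')).image e, σ Q.1 := by
        rw [Finset.sum_image ?_]
        · refine Finset.sum_congr rfl (fun F hF => ?_)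
          rw [he]; simp only [dif_pos (hsubs F hF)]
        · intro x hx y hy hxy
          rw [he] at hxy
          simp only [dif_pos (hsubs x hx), dif_pos (hsubs y hy)] at hxy
          apply Subtype.ext
          injection hxy
      rw [heq]
      exact ENNReal.sum_le_tsum _
    exact hinner.trans (hC F'.1 F'.2)
  -- step 2: each maximal cube, weak bound via g
  have step2 : ∀ F' ∈ M, σ F'.1 ≤ 2 * lam⁻¹ * ∫⁻ x in F'.1, g x ∂σ := by
    intro F' hF'
    have hFG : F' ∈ G := hMG hF'
    have h0 : σ F'.1 ≠ 0 := hG0 F' hFG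
    have htop : σ F'.1 ≠ ∞ := hGtop F'
    have havg : lam < avg σ f F'.1 := hGavg F' hFG
    rw [avg, if_neg h0] at havg
    -- split f
    have hsplit : (∫⁻ x in F'.1, f x ∂σ)
        ≤ (∫⁻ x in F'.1, g x ∂σ) + lam / 2 * σ F'.1 := by
      have hpt : ∀ x, f x ≤ g x + lam / 2 := by
        intro x
        rw [hg, Set.indicator]
        split_ifs with h
        · exact le_add_right (le_refl _)
        · simp only [Set.mem_setOf_eq, not_lt] at h
          simpa using h
      calc (∫⁻ x in F'.1, f x ∂σ) ≤ ∫⁻ x in F'.1, (g x + lam / 2) ∂σ :=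
            lintegral_mono hpt
      _ = (∫⁻ x in F'.1, g x ∂σ) + lam / 2 * σ F'.1 := by
            rw [lintegral_add_right _ measurable_const, setLIntegral_const]
    -- conclude lam/2 < avg of g
    have hkey : lam / 2 * σ F'.1 ≤ ∫⁻ x in F'.1, g x ∂σ := by
      by_contra hcon
      push_neg at hcon
      have : (∫⁻ x in F'.1, f x ∂σ) ≤ lam * σ F'.1 := by
        calc (∫⁻ x in F'.1, f x ∂σ) ≤ (∫⁻ x in F'.1, g x ∂σ) + lam / 2 * σ F'.1 := hsplit
        _ ≤ lam / 2 * σ F'.1 + lam / 2 * σ F'.1 := by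
            exact add_le_add_left hcon.le _
        _ = lam * σ F'.1 := by
            rw [← add_mul, ENNReal.add_halves]
      have : (∫⁻ x in F'.1, f x ∂σ) / σ F'.1 ≤ lam := by
        rw [ENNReal.div_le_iff h0 htop]
        exact this
      exact absurd havg (not_lt_of_ge this)
    calc σ F'.1 = 2 * lam⁻¹ * (lam / 2 * σ F'.1) := by
          have h2 : (2:ℝ≥0∞) * lam⁻¹ * (lam / 2 * σ F'.1)
              = (lam⁻¹ * lam) * ((2:ℝ≥0∞) * 2⁻¹) * σ F'.1 := by
            rw [div_eq_mul_inv]; ring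
          rw [h2, ENNReal.inv_mul_cancel hl0 hlt,
            ENNReal.mul_inv_cancel (by norm_num) (by norm_num), one_mul, one_mul]
    _ ≤ 2 * lam⁻¹ * ∫⁻ x in F'.1, g x ∂σ := by
          exact mul_le_mul_right hkey _
  -- step 3: disjointness: sum of integrals over M ≤ total integral
  have step3 : ∑ F' ∈ M, (∫⁻ x in F'.1, g x ∂σ) ≤ ∫⁻ x, g x ∂σ := by
    set ν := σ.withDensity g with hν
    have happ : ∀ F' : ↥𝓕, (∫⁻ x in F'.1, g x ∂σ) = ν F'.1 := by
      intro F'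
      rw [hν, withDensity_apply g (isDyadicCube_measurableSet (h𝓕 _ F'.2))]
    calc ∑ F' ∈ M, (∫⁻ x in F'.1, g x ∂σ) = ∑ F' ∈ M, ν F'.1 := by
          exact Finset.sum_congr rfl (fun F' _ => happ F')
    _ = ν (⋃ F' ∈ M, F'.1) := by
          rw [measure_biUnion_finset hMdisj (fun F' _ => isDyadicCube_measurableSet (h𝓕 _ F'.2))]
    _ ≤ ν Set.univ := measure_mono (Set.subset_univ _)
    _ = ∫⁻ x, g x ∂σ := by
          rw [hν, withDensity_apply g MeasurableSet.univ, Measure.restrict_univ]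
  calc ∑ F ∈ G, σ F.1 ≤ ∑ F' ∈ M, 2 * σ F'.1 := step1
  _ ≤ ∑ F' ∈ M, 2 * (2 * lam⁻¹ * ∫⁻ x in F'.1, g x ∂σ) := by
      exact Finset.sum_le_sum (fun F' hF' => mul_le_mul_right (step2 F' hF') _)
  _ = 4 * lam⁻¹ * ∑ F' ∈ M, (∫⁻ x in F'.1, g x ∂σ) := by
      rw [Finset.mul_sum]
      exact Finset.sum_congr rfl (fun F' _ => by ring)
  _ ≤ 4 * lam⁻¹ * ∫⁻ x, g x ∂σ := mul_le_mul_right step3 _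

lemma pointwise_bound (p : ℝ) (hp : 1 < p) : ∃ Cp : ℝ≥0∞, Cp ≠ 0 ∧ Cp ≠ ∞ ∧ ∀ a : ℝ≥0∞,
    ∑' j : ℤ, ((2:ℝ≥0∞) ^ (j+1:ℤ)) ^ p *
      (4 * ((2:ℝ≥0∞) ^ (j:ℤ))⁻¹ * (if (2:ℝ≥0∞) ^ (j:ℤ) / 2 < a then a else 0))
      ≤ Cp * a ^ p := by
  have h20 : (2:ℝ≥0∞) ≠ 0 := by norm_num
  have h2t : (2:ℝ≥0∞) ≠ ∞ := by norm_num
  set c : ℝ := p - 1 with hc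
  have hcpos : 0 < c := by simp [hc]; linarith
  set r : ℝ≥0∞ := 2 ^ (-c) with hr
  have hr1 : r < 1 := by
    rw [hr, ENNReal.rpow_neg, ENNReal.inv_lt_one]
    calc (1:ℝ≥0∞) = 2 ^ (0:ℝ) := by rw [ENNReal.rpow_zero]
    _ < 2 ^ c := ENNReal.rpow_lt_rpow_of_exponent_lt (by norm_num) h2t hcpos
  have hsub0 : (1:ℝ≥0∞) - r ≠ 0 := by
    rw [Ne, tsub_eq_zero_iff_le]
    exact not_le_of_gt hr1
  have hsubt : (1:ℝ≥0∞) - r ≠ ∞ := by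
    exact (lt_of_le_of_lt tsub_le_self one_lt_top).ne
  set Cp : ℝ≥0∞ := 4 * 2 ^ p * 4 ^ c * (1 - r)⁻¹ with hCp
  have hCp0 : Cp ≠ 0 := by
    rw [hCp]
    refine mul_ne_zero (mul_ne_zero (mul_ne_zero (by norm_num) ?_) ?_) ?_
    · simp [ENNReal.rpow_eq_zero_iff]
    · simp [ENNReal.rpow_eq_zero_iff]
    · rw [ENNReal.inv_ne_zero]; exact hsubt
  have hCpt : Cp ≠ ∞ := by
    rw [hCp]
    refine ENNReal.mul_ne_top (ENNReal.mul_ne_top (ENNReal.mul_ne_top (by norm_num) ?_) ?_) ?_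
    · exact (ENNReal.rpow_lt_top_of_nonneg (by linarith) h2t).ne
    · exact (ENNReal.rpow_lt_top_of_nonneg hcpos.le (by norm_num)).ne
    · rw [ENNReal.inv_ne_top]; exact hsub0
  refine ⟨Cp, hCp0, hCpt, fun a => ?_⟩
  by_cases ha0 : a = 0
  · simp [ha0]
  by_cases hat : a = ∞
  · rw [hat, ENNReal.top_rpow_of_pos (by linarith), ENNReal.mul_top hCp0]
    exact le_top
  obtain ⟨k₀, hk₁, hk₂⟩ := ENNReal.exists_mem_Ioc_zpow ha0 hat (by norm_num : (1:ℝ≥0∞) < 2) h2t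
  set K : ℤ := k₀ + 2 with hK
  -- constant identity
  have hconst : ∀ j : ℤ, ((2:ℝ≥0∞) ^ (j+1:ℤ)) ^ p * (4 * ((2:ℝ≥0∞) ^ (j:ℤ))⁻¹)
      = 4 * 2 ^ p * 2 ^ ((j:ℝ) * c) := by
    intro j
    rw [← ENNReal.rpow_intCast 2 (j+1), ← ENNReal.rpow_intCast 2 j]
    push_cast
    rw [← ENNReal.rpow_mul, ← ENNReal.rpow_neg]
    calc (2:ℝ≥0∞) ^ (((j:ℝ) + 1) * p) * (4 * 2 ^ (-(j:ℝ)))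
        = 4 * ((2:ℝ≥0∞) ^ (((j:ℝ) + 1) * p) * 2 ^ (-(j:ℝ))) := by ring
    _ = 4 * (2:ℝ≥0∞) ^ (((j:ℝ) + 1) * p + -(j:ℝ)) := by
        rw [ENNReal.rpow_add _ _ h20 h2t]
    _ = 4 * (2:ℝ≥0∞) ^ (p + (j:ℝ) * c) := by
        congr 1
        rw [hc]; ring
    _ = 4 * 2 ^ p * 2 ^ ((j:ℝ) * c) := by
        rw [ENNReal.rpow_add _ _ h20 h2t]; ring
  -- bound each term
  have hterm : ∀ j : ℤ, ((2:ℝ≥0∞) ^ (j+1:ℤ)) ^ p *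
      (4 * ((2:ℝ≥0∞) ^ (j:ℤ))⁻¹ * (if (2:ℝ≥0∞) ^ (j:ℤ) / 2 < a then a else 0))
      ≤ (4 * 2 ^ p * a) * (if j ≤ K then 2 ^ ((j:ℝ) * c) else 0) := by
    intro j
    by_cases hcond : (2:ℝ≥0∞) ^ (j:ℤ) / 2 < a
    · have hjK : j ≤ K := by
        by_contra hj
        push_neg at hj
        have h1 : (2:ℝ≥0∞) ^ (k₀ + 1 : ℤ) ≤ 2 ^ (j - 1 : ℤ) := by
          rw [← ENNReal.rpow_intCast 2 (k₀+1), ← ENNReal.rpow_intCast 2 (j-1)]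
          apply ENNReal.rpow_le_rpow_of_exponent_le (by norm_num)
          push_cast
          have : k₀ + 2 ≤ j - 1 + 1 := by omega
          have : (k₀:ℝ) + 1 ≤ (j:ℝ) - 1 := by exact_mod_cast by omega
          linarith
        have h2 : (2:ℝ≥0∞) ^ (j:ℤ) / 2 = 2 ^ (j - 1 : ℤ) := by
          rw [ENNReal.zpow_sub h20 h2t, zpow_one, div_eq_mul_inv]
        have : a < a := lt_of_le_of_lt (hk₂.trans (h1.trans (h2.symm.le))) hcond
        exact absurd this (lt_irrefl a)
      rw [if_pos hcond, if_pos hjK, ← mul_assoc, hconst j]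
      exact le_of_eq (by ring)
    · rw [if_neg hcond]
      simp
  calc ∑' j : ℤ, ((2:ℝ≥0∞) ^ (j+1:ℤ)) ^ p *
      (4 * ((2:ℝ≥0∞) ^ (j:ℤ))⁻¹ * (if (2:ℝ≥0∞) ^ (j:ℤ) / 2 < a then a else 0))
      ≤ ∑' j : ℤ, (4 * 2 ^ p * a) * (if j ≤ K then 2 ^ ((j:ℝ) * c) else 0) :=
        Summable.tsum_le_tsum hterm ENNReal.summable ENNReal.summable
  _ = (4 * 2 ^ p * a) * ∑' j : ℤ, (if j ≤ K then (2:ℝ≥0∞) ^ ((j:ℝ) * c) else 0) :=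
        ENNReal.tsum_mul_left
  _ ≤ (4 * 2 ^ p * a) * (4 ^ c * a ^ c * (1 - r)⁻¹) := by
      apply mul_le_mul_right
      -- compute the geometric sum
      have hinj : Function.Injective (fun m : ℕ => K - (m:ℤ)) := by
        intro x y h; simp only at h; omega
      have hsupp : Function.support
          (fun j : ℤ => if j ≤ K then (2:ℝ≥0∞) ^ ((j:ℝ) * c) else 0)
          ⊆ Set.range (fun m : ℕ => K - (m:ℤ)) := by
        intro j hj
        simp only [Function.mem_support] at hj
        have hjK : j ≤ K := by
          by_contra h; rw [if_neg h] at hj; exact hj rfl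
        refine ⟨(K - j).toNat, ?_⟩
        show K - ((K - j).toNat : ℤ) = j
        omega
      rw [← Function.Injective.tsum_eq hinj hsupp]
      have heval : ∀ m : ℕ, (if K - (m:ℤ) ≤ K then (2:ℝ≥0∞) ^ ((↑(K - (m:ℤ)) : ℝ) * c) else 0)
          = 2 ^ ((K:ℝ) * c) * r ^ m := by
        intro m
        rw [if_pos (by omega)]
        push_cast
        rw [show ((K:ℝ) - (m:ℝ)) * c = (K:ℝ) * c + (m:ℝ) * (-c) by ring,
          ENNReal.rpow_add _ _ h20 h2t]
        congr 1
        rw [mul_comm (m:ℝ) (-c), ENNReal.rpow_mul, ENNReal.rpow_natCast, hr]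
      calc ∑' m : ℕ, (if K - (m:ℤ) ≤ K then (2:ℝ≥0∞) ^ ((↑(K - (m:ℤ)) : ℝ) * c) else 0)
          = ∑' m : ℕ, 2 ^ ((K:ℝ) * c) * r ^ m := by
            exact tsum_congr heval
      _ = 2 ^ ((K:ℝ) * c) * (1 - r)⁻¹ := by
            rw [ENNReal.tsum_mul_left, ENNReal.tsum_geometric]
      _ ≤ 4 ^ c * a ^ c * (1 - r)⁻¹ := by
            apply mul_le_mul_left
            have h2K : (2:ℝ≥0∞) ^ ((K:ℝ)) ≤ 4 * a := by
              rw [ENNReal.rpow_intCast 2 K, hK, ENNReal.zpow_add h20 h2t]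
              calc (2:ℝ≥0∞) ^ k₀ * 2 ^ (2:ℤ) ≤ a * 2 ^ (2:ℤ) :=
                    mul_le_mul_left hk₁.le _
              _ = 4 * a := by
                    rw [mul_comm]
                    congr 1
                    rw [show (2:ℤ) = ((2:ℕ):ℤ) by norm_num, zpow_natCast]
                    norm_num
            calc (2:ℝ≥0∞) ^ ((K:ℝ) * c) = ((2:ℝ≥0∞) ^ ((K:ℝ))) ^ c :=
                  ENNReal.rpow_mul 2 (K:ℝ) c
            _ ≤ (4 * a) ^ c := ENNReal.rpow_le_rpow h2K hcpos.le
            _ = 4 ^ c * a ^ c := ENNReal.mul_rpow_of_nonneg _ _ hcpos.le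
  _ = Cp * a ^ p := by
      rw [hCp]
      have : a * a ^ c = a ^ p := by
        have h1 : a * a ^ c = a ^ (1:ℝ) * a ^ c := by rw [ENNReal.rpow_one]
        rw [h1, ← ENNReal.rpow_add _ _ ha0 hat,
          show (1:ℝ) + c = p by rw [hc]; ring]
      calc (4 * 2 ^ p * a) * (4 ^ c * a ^ c * (1 - r)⁻¹)
          = (4 * 2 ^ p * 4 ^ c * (1 - r)⁻¹) * (a * a ^ c) := by ring
      _ = 4 * 2 ^ p * 4 ^ c * (1 - r)⁻¹ * a ^ p := by rw [this]

lemma avg_ne_top {n : ℕ} {σ : Measure (Fin n → ℝ)} [IsLocallyFiniteMeasure σ]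
    {f : (Fin n → ℝ) → ℝ≥0∞} (hf : Measurable f) {F : Set (Fin n → ℝ)}
    (hF : IsDyadicCube F) {p : ℝ} (hp : 1 < p)
    (hR : ∫⁻ x, f x ^ p ∂σ ≠ ∞) : avg σ f F ≠ ∞ := by
  rw [avg]
  split_ifs with h0
  · simp
  have hip : (∫⁻ x in F, f x ∂σ) ≠ ∞ := by
    have hconj : p.HolderConjugate p.conjExponent := Real.HolderConjugate.conjExponent hp
    have hH := ENNReal.lintegral_mul_le_Lp_mul_Lq (σ.restrict F) hconj
      hf.aemeasurable aemeasurable_const (g := fun _ => (1:ℝ≥0∞))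
    simp only [Pi.mul_apply, mul_one, ENNReal.one_rpow, lintegral_const, one_mul] at hH
    have h1 : (∫⁻ x in F, f x ^ p ∂σ) ≤ ∫⁻ x, f x ^ p ∂σ :=
      setLIntegral_le_lintegral _ _
    have hfin1 : (∫⁻ x in F, f x ^ p ∂σ) ^ (1/p) ≠ ∞ :=
      (ENNReal.rpow_lt_top_of_nonneg (by positivity) (ne_top_of_le_ne_top hR h1)).ne
    have hfin2 : ((σ.restrict F) Set.univ) ^ (1/p.conjExponent) ≠ ∞ := by
      have hq := hconj.symm.pos
      refine (ENNReal.rpow_lt_top_of_nonneg (by positivity) ?_).ne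
      rw [Measure.restrict_apply MeasurableSet.univ, Set.univ_inter]
      exact (isDyadicCube_measure_lt_top hF).ne
    exact ne_top_of_le_ne_top (ENNReal.mul_ne_top hfin1 hfin2) hH
  exact (ENNReal.div_lt_top hip h0).ne

theorem dyadic_Carleson_embedding (p : ℝ) (hp : 1 < p) :
    ∃ C : ℝ≥0∞, C < ∞ ∧
      ∀ (n : ℕ) (σ : Measure (Fin n → ℝ)), IsLocallyFiniteMeasure σ →
      ∀ 𝓕 : Set (Set (Fin n → ℝ)), (∀ F ∈ 𝓕, IsDyadicCube F) →
      (∀ P ∈ 𝓕, ∑' Q : {Q // Q ∈ 𝓕 ∧ Q ⊆ P}, σ Q.1 ≤ 2 * σ P) →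
      ∀ f : (Fin n → ℝ) → ℝ≥0∞, Measurable f →
      (∑' F : 𝓕, (if σ F.1 = 0 then 0 else (∫⁻ x in F.1, f x ∂σ) / σ F.1) ^ p * σ F.1) ^ (1 / p)
        ≤ C * (∫⁻ x, f x ^ p ∂σ) ^ (1 / p) := by
  obtain ⟨Cp, hCp0, hCpt, hCpbd⟩ := pointwise_bound p hp
  have hppos : (0:ℝ) < p := by linarith
  refine ⟨Cp ^ (1/p), ENNReal.rpow_lt_top_of_nonneg (by positivity) hCpt, ?_⟩
  intro n σ hσ 𝓕 h𝓕 hC f hf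
  have hCne0 : Cp ^ (1/p) ≠ 0 := by
    simp [ENNReal.rpow_eq_zero_iff, hCp0, hCpt]
  have havg : ∀ F : ↥𝓕,
      (if σ F.1 = 0 then 0 else (∫⁻ x in F.1, f x ∂σ) / σ F.1) = avg σ f F.1 :=
    fun F => rfl
  simp only [havg]
  by_cases hR : (∫⁻ x, f x ^ p ∂σ) = ∞
  · rw [hR, ENNReal.top_rpow_of_pos (by positivity), ENNReal.mul_top hCne0]
    exact le_top
  -- main estimate
  suffices h : ∑' F : ↥𝓕, avg σ f F.1 ^ p * σ F.1 ≤ Cp * ∫⁻ x, f x ^ p ∂σ by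
    calc (∑' F : ↥𝓕, avg σ f F.1 ^ p * σ F.1) ^ (1/p)
        ≤ (Cp * ∫⁻ x, f x ^ p ∂σ) ^ (1/p) := ENNReal.rpow_le_rpow h (by positivity)
    _ = Cp ^ (1/p) * (∫⁻ x, f x ^ p ∂σ) ^ (1/p) :=
        ENNReal.mul_rpow_of_nonneg _ _ (by positivity)
  rw [ENNReal.tsum_eq_iSup_sum]
  refine iSup_le fun s => ?_
  set s' := s.filter (fun F : ↥𝓕 => avg σ f F.1 ≠ 0) with hs'
  have hsum0 : ∑ F ∈ s', avg σ f F.1 ^ p * σ F.1 = ∑ F ∈ s, avg σ f F.1 ^ p * σ F.1 := by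
    refine Finset.sum_filter_of_ne (fun F _ hne => ?_)
    intro h0
    rw [h0, ENNReal.zero_rpow_of_pos hppos, zero_mul] at hne
    exact hne rfl
  rw [← hsum0]
  -- choose levels
  have hks : ∀ F : ↥𝓕, ∃ k : ℤ, F ∈ s' →
      (2:ℝ≥0∞) ^ k < avg σ f F.1 ∧ avg σ f F.1 ≤ 2 ^ (k+1) := by
    intro F
    by_cases hFs : F ∈ s'
    · have hne0 : avg σ f F.1 ≠ 0 := (Finset.mem_filter.mp hFs).2
      have hnet : avg σ f F.1 ≠ ∞ := avg_ne_top hf (h𝓕 _ F.2) hp hR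
      obtain ⟨k, hk1, hk2⟩ := ENNReal.exists_mem_Ioc_zpow hne0 hnet
        (by norm_num : (1:ℝ≥0∞) < 2) (by norm_num)
      exact ⟨k, fun _ => ⟨hk1, hk2⟩⟩
    · exact ⟨0, fun h => absurd h hFs⟩
  choose k hk using hks
  calc ∑ F ∈ s', avg σ f F.1 ^ p * σ F.1
      ≤ ∑ F ∈ s', ((2:ℝ≥0∞) ^ (k F + 1 : ℤ)) ^ p * σ F.1 := by
        refine Finset.sum_le_sum (fun F hF => ?_)
        exact mul_le_mul_left (ENNReal.rpow_le_rpow (hk F hF).2 hppos.le) _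
  _ = ∑ j ∈ s'.image k, ∑ F ∈ s'.filter (fun F => k F = j),
        ((2:ℝ≥0∞) ^ (k F + 1 : ℤ)) ^ p * σ F.1 :=
        (Finset.sum_fiberwise_of_maps_to (fun F hF => Finset.mem_image_of_mem k hF) _).symm
  _ ≤ ∑ j ∈ s'.image k, ((2:ℝ≥0∞) ^ (j + 1 : ℤ)) ^ p *
        ∑ F ∈ s.filter (fun F : ↥𝓕 => (2:ℝ≥0∞) ^ (j:ℤ) < avg σ f F.1), σ F.1 := by
      refine Finset.sum_le_sum (fun j _ => ?_)
      have heq : ∑ F ∈ s'.filter (fun F => k F = j), ((2:ℝ≥0∞) ^ (k F + 1 : ℤ)) ^ p * σ F.1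
          = ∑ F ∈ s'.filter (fun F => k F = j), ((2:ℝ≥0∞) ^ (j + 1 : ℤ)) ^ p * σ F.1 := by
        refine Finset.sum_congr rfl (fun F hF => ?_)
        rw [(Finset.mem_filter.mp hF).2]
      rw [heq, ← Finset.mul_sum]
      refine mul_le_mul_right ?_ _
      refine Finset.sum_le_sum_of_subset (fun F hF => ?_)
      rw [Finset.mem_filter] at hF ⊢
      have hFs' := hF.1
      refine ⟨Finset.mem_of_mem_filter F hFs', ?_⟩
      have := (hk F hFs').1
      rwa [hF.2] at this
  _ ≤ ∑ j ∈ s'.image k, ((2:ℝ≥0∞) ^ (j + 1 : ℤ)) ^ p *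
        (4 * ((2:ℝ≥0∞) ^ (j:ℤ))⁻¹ *
          ∫⁻ x, Set.indicator {x | (2:ℝ≥0∞) ^ (j:ℤ) / 2 < f x} f x ∂σ) := by
      refine Finset.sum_le_sum (fun j _ => ?_)
      refine mul_le_mul_right ?_ _
      have hl0 : ((2:ℝ≥0∞) ^ (j:ℤ)) ≠ 0 := (ENNReal.zpow_pos (by norm_num) (by norm_num) j).ne'
      have hlt : ((2:ℝ≥0∞) ^ (j:ℤ)) ≠ ∞ := (ENNReal.zpow_lt_top (by norm_num) (by norm_num) j).ne
      exact core_estimate h𝓕 hC hf s hl0 hlt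
  _ ≤ ∑' j : ℤ, ((2:ℝ≥0∞) ^ (j + 1 : ℤ)) ^ p *
        (4 * ((2:ℝ≥0∞) ^ (j:ℤ))⁻¹ *
          ∫⁻ x, Set.indicator {x | (2:ℝ≥0∞) ^ (j:ℤ) / 2 < f x} f x ∂σ) :=
      ENNReal.sum_le_tsum _
  _ = ∑' j : ℤ, ∫⁻ x, ((2:ℝ≥0∞) ^ (j + 1 : ℤ)) ^ p *
        (4 * ((2:ℝ≥0∞) ^ (j:ℤ))⁻¹ * (if (2:ℝ≥0∞) ^ (j:ℤ) / 2 < f x then f x else 0)) ∂σ := by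
      refine tsum_congr (fun j => ?_)
      have hind : Measurable (Set.indicator {x | (2:ℝ≥0∞) ^ (j:ℤ) / 2 < f x} f) :=
        hf.indicator (hf measurableSet_Ioi)
      calc ((2:ℝ≥0∞) ^ (j + 1 : ℤ)) ^ p *
            (4 * ((2:ℝ≥0∞) ^ (j:ℤ))⁻¹ *
              ∫⁻ x, Set.indicator {x | (2:ℝ≥0∞) ^ (j:ℤ) / 2 < f x} f x ∂σ)
          = (((2:ℝ≥0∞) ^ (j + 1 : ℤ)) ^ p * (4 * ((2:ℝ≥0∞) ^ (j:ℤ))⁻¹)) *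
              ∫⁻ x, Set.indicator {x | (2:ℝ≥0∞) ^ (j:ℤ) / 2 < f x} f x ∂σ := by ring
      _ = ∫⁻ x, (((2:ℝ≥0∞) ^ (j + 1 : ℤ)) ^ p * (4 * ((2:ℝ≥0∞) ^ (j:ℤ))⁻¹)) *
              Set.indicator {x | (2:ℝ≥0∞) ^ (j:ℤ) / 2 < f x} f x ∂σ :=
            (lintegral_const_mul _ hind).symm
      _ = ∫⁻ x, ((2:ℝ≥0∞) ^ (j + 1 : ℤ)) ^ p *
            (4 * ((2:ℝ≥0∞) ^ (j:ℤ))⁻¹ * (if (2:ℝ≥0∞) ^ (j:ℤ) / 2 < f x then f x else 0)) ∂σ := by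
            refine lintegral_congr (fun x => ?_)
            rw [Set.indicator_apply]
            simp only [Set.mem_setOf_eq]
            ring
  _ = ∫⁻ x, ∑' j : ℤ, ((2:ℝ≥0∞) ^ (j + 1 : ℤ)) ^ p *
        (4 * ((2:ℝ≥0∞) ^ (j:ℤ))⁻¹ * (if (2:ℝ≥0∞) ^ (j:ℤ) / 2 < f x then f x else 0)) ∂σ := by
      refine (lintegral_tsum (fun j => ?_)).symm
      refine (Measurable.const_mul ?_ _).aemeasurable
      refine Measurable.const_mul ?_ _
      have : (fun x => if (2:ℝ≥0∞) ^ (j:ℤ) / 2 < f x then f x else 0)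
          = Set.indicator {x | (2:ℝ≥0∞) ^ (j:ℤ) / 2 < f x} f := by
        ext x; rw [Set.indicator_apply]; simp only [Set.mem_setOf_eq]
      rw [this]
      exact hf.indicator (hf measurableSet_Ioi)
  _ ≤ ∫⁻ x, Cp * f x ^ p ∂σ := lintegral_mono (fun x => hCpbd (f x))
  _ = Cp * ∫⁻ x, f x ^ p ∂σ := lintegral_const_mul _ (hf.pow_const p)
end
end

section
/- Let 0 < q < ∞ and s = ∞, and let μ be a positive locally finite Borel measure on ℝⁿ. Let (b_Q)_{Q ∈ 𝒟} be nonnegative reals. Then ‖sup_{Q ∈ 𝒟} b_Q χ_Q‖_{L^q(μ)} ≤ C if and only if for every family (E_Q)_{Q ∈ 𝒟} of pairwise disjoint measurable sets with E_Q ⊆ Q, (∑_{Q ∈ 𝒟} b_Q^q μ(E_Q))^{1/q} ≤ C. -/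
open MeasureTheory ENNReal

noncomputable section

lemma measurableSet_dyadicCube {n : ℕ} {k : ℤ} {j : Fin n → ℤ} :
    MeasurableSet (DyadicCube n k j) := by
  have h : DyadicCube n k j =
      Set.univ.pi (fun i => Set.Ico ((j i : ℝ) / 2 ^ k) (((j i : ℝ) + 1) / 2 ^ k)) := by
    ext x; simp [DyadicCube, Set.mem_pi, Set.mem_Ico]
  rw [h]
  exact MeasurableSet.univ_pi fun i => measurableSet_Ico

lemma IsDyadicCube.measurableSet {n : ℕ} {Q : Set (Fin n → ℝ)} (h : IsDyadicCube Q) :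
    MeasurableSet Q := by
  obtain ⟨k, j, rfl⟩ := h
  exact measurableSet_dyadicCube

instance instCountableDyadic (n : ℕ) : Countable {Q : Set (Fin n → ℝ) // IsDyadicCube Q} := by
  have hsurj : Function.Surjective
      (fun p : ℤ × (Fin n → ℤ) =>
        (⟨DyadicCube n p.1 p.2, p.1, p.2, rfl⟩ : {Q : Set (Fin n → ℝ) // IsDyadicCube Q})) := by
    rintro ⟨Q, k, j, rfl⟩
    exact ⟨(k, j), rfl⟩
  exact hsurj.countable

lemma ennreal_rpow_iSup {ι : Sort*} (f : ι → ℝ≥0∞) {q : ℝ} (hq : 0 < q) :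
    (⨆ i, f i) ^ q = ⨆ i, (f i) ^ q := by
  refine le_antisymm ?_ (iSup_le fun i => ENNReal.rpow_le_rpow (le_iSup f i) hq.le)
  have h1 : (⨆ i, f i) ≤ (⨆ i, (f i) ^ q) ^ (1 / q) := by
    refine iSup_le fun i => ?_
    have : f i = ((f i) ^ q) ^ (1 / q) := by
      rw [← ENNReal.rpow_mul, mul_one_div_cancel hq.ne', ENNReal.rpow_one]
    rw [this]
    exact ENNReal.rpow_le_rpow (le_iSup (fun i => (f i) ^ q) i) (by positivity)
  calc (⨆ i, f i) ^ q ≤ ((⨆ i, (f i) ^ q) ^ (1 / q)) ^ q := ENNReal.rpow_le_rpow h1 hq.le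
    _ = ⨆ i, (f i) ^ q := by
        rw [← ENNReal.rpow_mul, one_div_mul_cancel hq.ne', ENNReal.rpow_one]

/-- Linearization of a finite supremum of indicator functions of dyadic cubes. -/
lemma linearize {n : ℕ} (b : Set (Fin n → ℝ) → ℝ≥0∞) {q : ℝ} (hq : 0 < q)
    (s : Finset {Q : Set (Fin n → ℝ) // IsDyadicCube Q}) :
    ∃ E : Set (Fin n → ℝ) → Set (Fin n → ℝ),
      (∀ S, E S ⊆ S ∧ MeasurableSet (E S)) ∧
      (∀ S S', S ≠ S' → Disjoint (E S) (E S')) ∧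
      (∀ x, (⨆ Q ∈ s, Set.indicator Q.1 (fun _ => b Q.1) x) ^ q
          = ∑ Q ∈ s, Set.indicator (E Q.1) (fun _ => b Q.1 ^ q) x) := by
  classical
  induction s using Finset.induction_on with
  | empty =>
      refine ⟨fun _ => ∅, fun S => ⟨Set.empty_subset _, MeasurableSet.empty⟩,
        fun _ _ _ => disjoint_bot_left, fun x => ?_⟩
      simp [ENNReal.zero_rpow_of_pos hq]
  | @insert a s ha ih =>
      obtain ⟨E', hE'1, hE'2, hE'4⟩ := ih
      set F : (Fin n → ℝ) → ℝ≥0∞ :=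
        fun x => ⨆ Q ∈ s, Set.indicator Q.1 (fun _ => b Q.1) x with hF
      set G : (Fin n → ℝ) → ℝ≥0∞ := fun x => Set.indicator a.1 (fun _ => b a.1) x with hG
      have hFmeas : Measurable F :=
        Measurable.iSup fun Q => Measurable.iSup fun _ =>
          measurable_const.indicator Q.2.measurableSet
      have hGmeas : Measurable G := measurable_const.indicator a.2.measurableSet
      set A : Set (Fin n → ℝ) := {x | F x ≤ G x} with hA
      have hAmeas : MeasurableSet A := measurableSet_le hFmeas hGmeas
      set E : Set (Fin n → ℝ) → Set (Fin n → ℝ) :=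
        fun S => if S = a.1 then a.1 ∩ A else E' S \ A with hEdef
      have hEa : E a.1 = a.1 ∩ A := by rw [hEdef]; simp
      have hEQ : ∀ S : Set (Fin n → ℝ), S ≠ a.1 → E S = E' S \ A := by
        intro S hS; rw [hEdef]; simp [hS]
      refine ⟨E, fun S => ?_, ?_, ?_⟩
      · by_cases hS : S = a.1
        · subst hS; rw [hEa]
          exact ⟨Set.inter_subset_left, a.2.measurableSet.inter hAmeas⟩
        · rw [hEQ S hS]
          exact ⟨(Set.diff_subset).trans (hE'1 S).1, (hE'1 S).2.diff hAmeas⟩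
      · intro S S' hne
        by_cases hS : S = a.1 <;> by_cases hS' : S' = a.1
        · exact absurd (hS.trans hS'.symm) hne
        · rw [hS, hEa, hEQ S' hS']
          exact Set.disjoint_sdiff_right.mono Set.inter_subset_right le_rfl
        · rw [hS', hEa, hEQ S hS]
          exact Set.disjoint_sdiff_left.mono_right Set.inter_subset_right
        · rw [hEQ S hS, hEQ S' hS']
          exact (hE'2 S S' hne).mono Set.diff_subset Set.diff_subset
      · intro x
        rw [Finset.sum_insert ha]
        have hsup : (⨆ Q ∈ insert a s, Set.indicator Q.1 (fun _ => b Q.1) x) = G x ⊔ F x := by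
          rw [hF, hG]
          exact Finset.iSup_insert a s _
        rw [hsup]
        have hQa : ∀ Q ∈ s, (Q : {Q : Set (Fin n → ℝ) // IsDyadicCube Q}).1 ≠ a.1 :=
          fun Q hQ h => ha (Subtype.ext h ▸ hQ)
        by_cases hxA : x ∈ A
        · have hFG : F x ≤ G x := hxA
          rw [sup_eq_left.mpr hFG]
          have hterm : ∀ Q ∈ s, Set.indicator (E Q.1) (fun _ => b Q.1 ^ q) x = 0 := by
            intro Q hQ
            rw [hEQ Q.1 (hQa Q hQ)]
            exact Set.indicator_of_notMem (fun hm => hm.2 hxA) _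
          rw [Finset.sum_congr rfl hterm, Finset.sum_const_zero, add_zero, hEa]
          by_cases hxa : x ∈ a.1
          · rw [Set.indicator_of_mem (Set.mem_inter hxa hxA)]
            show (Set.indicator a.1 (fun _ => b a.1) x) ^ q = b a.1 ^ q
            rw [Set.indicator_of_mem hxa]
          · rw [Set.indicator_of_notMem
              (fun hm => hxa (Set.mem_of_mem_inter_left hm))]
            show (Set.indicator a.1 (fun _ => b a.1) x) ^ q = 0
            rw [Set.indicator_of_notMem hxa, ENNReal.zero_rpow_of_pos hq]
        · have hGF : G x ≤ F x := le_of_not_ge hxA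
          rw [sup_eq_right.mpr hGF, hEa,
            Set.indicator_of_notMem (fun hm => hxA hm.2), zero_add, hE'4 x]
          refine Finset.sum_congr rfl fun Q hQ => ?_
          rw [hEQ Q.1 (hQa Q hQ)]
          by_cases hm : x ∈ E' Q.1
          · rw [Set.indicator_of_mem hm,
              Set.indicator_of_mem (show x ∈ E' Q.1 \ A from ⟨hm, hxA⟩)]
          · rw [Set.indicator_of_notMem hm,
              Set.indicator_of_notMem (fun h : x ∈ E' Q.1 \ A => hm h.1)]

theorem lq_linfty_norm_iff_disjoint_sets
    {n : ℕ} (μ : Measure (Fin n → ℝ)) [IsLocallyFiniteMeasure μ]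
    (q : ℝ) (hq : 0 < q)
    (b : Set (Fin n → ℝ) → ℝ≥0∞) (C : ℝ≥0∞) :
    (∫⁻ x, (⨆ Q : {Q : Set (Fin n → ℝ) // IsDyadicCube Q},
        Set.indicator Q.1 (fun _ => b Q.1) x) ^ q ∂μ) ^ (1 / q) ≤ C
    ↔ ∀ E : Set (Fin n → ℝ) → Set (Fin n → ℝ),
        (∀ Q : Set (Fin n → ℝ), IsDyadicCube Q → E Q ⊆ Q ∧ MeasurableSet (E Q)) →
        (∀ Q Q' : Set (Fin n → ℝ), IsDyadicCube Q → IsDyadicCube Q' → Q ≠ Q' →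
          Disjoint (E Q) (E Q')) →
        (∑' Q : {Q : Set (Fin n → ℝ) // IsDyadicCube Q}, b Q.1 ^ q * μ (E Q.1)) ^ (1 / q) ≤ C := by
  classical
  set ι := {Q : Set (Fin n → ℝ) // IsDyadicCube Q}
  set g : ι → (Fin n → ℝ) → ℝ≥0∞ := fun Q x => Set.indicator Q.1 (fun _ => b Q.1) x with hg
  constructor
  · -- easy direction
    intro hnorm E hE hdisj
    have hle : ∀ x, (∑' Q : ι, Set.indicator (E Q.1) (fun _ => b Q.1 ^ q) x)
        ≤ (⨆ Q : ι, g Q x) ^ q := by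
      intro x
      by_cases hx : ∃ Q : ι, x ∈ E Q.1
      · obtain ⟨Q0, hQ0⟩ := hx
        rw [tsum_eq_single Q0 (fun Q' hne => ?_)]
        · rw [Set.indicator_of_mem hQ0]
          refine ENNReal.rpow_le_rpow ?_ hq.le
          have hmem : x ∈ Q0.1 := (hE Q0.1 Q0.2).1 hQ0
          rw [← Set.indicator_of_mem hmem (fun _ => b Q0.1)]
          exact le_iSup (fun Q => g Q x) Q0
        · have hne' : Q'.1 ≠ Q0.1 := fun h => hne (Subtype.ext h)
          have hd := hdisj Q'.1 Q0.1 Q'.2 Q0.2 hne'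
          exact Set.indicator_of_notMem (fun hm => Set.disjoint_left.mp hd hm hQ0) _
      · have hzero : ∀ Q : ι, Set.indicator (E Q.1) (fun _ => b Q.1 ^ q) x = 0 :=
          fun Q => Set.indicator_of_notMem (fun hm => hx ⟨Q, hm⟩) _
        rw [tsum_congr hzero, tsum_zero]
        exact zero_le
    have hsum : (∑' Q : ι, b Q.1 ^ q * μ (E Q.1))
        = ∫⁻ x, ∑' Q : ι, Set.indicator (E Q.1) (fun _ => b Q.1 ^ q) x ∂μ := by
      rw [lintegral_tsum
        (f := fun (Q : ι) (x : Fin n → ℝ) => Set.indicator (E Q.1) (fun _ => b Q.1 ^ q) x)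
        (fun Q => (measurable_const.indicator (hE Q.1 Q.2).2).aemeasurable)]
      exact tsum_congr fun Q => (lintegral_indicator_const (hE Q.1 Q.2).2 _).symm
    calc (∑' Q : ι, b Q.1 ^ q * μ (E Q.1)) ^ (1 / q)
        ≤ (∫⁻ x, (⨆ Q : ι, g Q x) ^ q ∂μ) ^ (1 / q) := by
          refine ENNReal.rpow_le_rpow ?_ (by positivity)
          rw [hsum]
          exact lintegral_mono hle
      _ ≤ C := hnorm
  · -- hard direction
    intro h
    have key : ∀ s : Finset ι, (∫⁻ x, (⨆ Q ∈ s, g Q x) ^ q ∂μ) ≤ C ^ q := by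
      intro s
      obtain ⟨E, hE1, hE2, hE4⟩ := linearize b hq s
      have step1 : (∫⁻ x, (⨆ Q ∈ s, g Q x) ^ q ∂μ)
          = ∑ Q ∈ s, b Q.1 ^ q * μ (E Q.1) := by
        calc (∫⁻ x, (⨆ Q ∈ s, g Q x) ^ q ∂μ)
            = ∫⁻ x, ∑ Q ∈ s, Set.indicator (E Q.1) (fun _ => b Q.1 ^ q) x ∂μ := by
              exact lintegral_congr fun x => hE4 x
          _ = ∑ Q ∈ s, ∫⁻ x, Set.indicator (E Q.1) (fun _ => b Q.1 ^ q) x ∂μ :=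
              lintegral_finset_sum s fun Q _ => measurable_const.indicator (hE1 Q.1).2
          _ = ∑ Q ∈ s, b Q.1 ^ q * μ (E Q.1) :=
              Finset.sum_congr rfl fun Q _ => lintegral_indicator_const (hE1 Q.1).2 _
      have step2 : (∑' Q : ι, b Q.1 ^ q * μ (E Q.1)) ≤ C ^ q := by
        have happ := h E (fun Q _ => hE1 Q) (fun Q Q' _ _ hne => hE2 Q Q' hne)
        have := ENNReal.rpow_le_rpow happ hq.le
        rwa [← ENNReal.rpow_mul, one_div_mul_cancel hq.ne', ENNReal.rpow_one] at this
      rw [step1]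
      exact (ENNReal.sum_le_tsum s).trans step2
    have hmeas : ∀ s : Finset ι, AEMeasurable (fun x => (⨆ Q ∈ s, g Q x) ^ q) μ := by
      intro s
      refine Measurable.aemeasurable ?_
      refine Measurable.pow_const ?_ q
      exact Measurable.iSup fun Q => Measurable.iSup fun _ =>
        measurable_const.indicator Q.2.measurableSet
    have hdir : Directed (· ≤ ·) (fun s : Finset ι => fun x => (⨆ Q ∈ s, g Q x) ^ q) := by
      refine Monotone.directed_le fun s t hst x => ?_
      exact ENNReal.rpow_le_rpow (biSup_mono fun Q hQ => hst hQ) hq.le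
    have hmono := lintegral_iSup_directed hmeas hdir
    have hpt : ∀ x, (⨆ Q : ι, g Q x) ^ q = ⨆ s : Finset ι, (⨆ Q ∈ s, g Q x) ^ q := by
      intro x
      rw [iSup_eq_iSup_finset (fun Q => g Q x)]
      exact ennreal_rpow_iSup _ hq
    have : (∫⁻ x, (⨆ Q : ι, g Q x) ^ q ∂μ) ≤ C ^ q := by
      calc (∫⁻ x, (⨆ Q : ι, g Q x) ^ q ∂μ)
          = ∫⁻ x, ⨆ s : Finset ι, (⨆ Q ∈ s, g Q x) ^ q ∂μ := lintegral_congr hpt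
        _ = ⨆ s : Finset ι, ∫⁻ x, (⨆ Q ∈ s, g Q x) ^ q ∂μ := hmono
        _ ≤ C ^ q := iSup_le key
    calc (∫⁻ x, (⨆ Q : ι, g Q x) ^ q ∂μ) ^ (1 / q)
        ≤ (C ^ q) ^ (1 / q) := ENNReal.rpow_le_rpow this (by positivity)
      _ = C := by rw [← ENNReal.rpow_mul, mul_one_div_cancel hq.ne', ENNReal.rpow_one]
end
end

section
/- Let σ, μ be positive locally finite Borel measures on ℝⁿ, (λ_Q)_{Q ∈ 𝒟} nonnegative, 1 < p < ∞, and s = q ∈ (1, p). Then the inequality ‖(∑_{Q ∈ 𝒟} λ_Q^q (∫_Q f dσ)^q χ_Q)^{1/q}‖_{L^q(μ)} ≤ C ‖f‖_{L^p(σ)} for all nonnegative f holds if and only if the function ∑_{Q ∈ 𝒟} λ_Q^q σ(Q)^{q−1} μ(Q) χ_Q belongs to L^{(p/q)'}(σ), where (p/q)' is the Hölder conjugate of p/q. -/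
open MeasureTheory ENNReal

noncomputable section

namespace Dyad

variable {n : ℕ}

lemma two_zpow_pos (k : ℤ) : (0:ℝ) < 2 ^ k := zpow_pos (by norm_num) k

lemma mem_iff {k : ℤ} {j : Fin n → ℤ} {x : Fin n → ℝ} :
    x ∈ DyadicCube n k j ↔ ∀ i, j i = ⌊x i * 2 ^ k⌋ := by
  unfold DyadicCube
  simp only [Set.mem_setOf_eq]
  refine forall_congr' fun i => ?_
  rw [eq_comm, Int.floor_eq_iff]
  constructor
  · rintro ⟨h1, h2⟩
    constructor
    · rwa [div_le_iff₀ (two_zpow_pos k)] at h1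
    · rwa [lt_div_iff₀ (two_zpow_pos k)] at h2
  · rintro ⟨h1, h2⟩
    constructor
    · rwa [div_le_iff₀ (two_zpow_pos k)]
    · rwa [lt_div_iff₀ (two_zpow_pos k)]

/-- the dyadic cube of generation `k` containing `x` -/
def cubeOf (n : ℕ) (k : ℤ) (x : Fin n → ℝ) : Set (Fin n → ℝ) :=
  DyadicCube n k (fun i => ⌊x i * 2 ^ k⌋)

lemma mem_cubeOf (k : ℤ) (x : Fin n → ℝ) : x ∈ cubeOf n k x :=
  mem_iff.2 fun _ => rfl

lemma eq_cubeOf_of_mem {k : ℤ} {j : Fin n → ℤ} {x : Fin n → ℝ}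
    (hx : x ∈ DyadicCube n k j) : DyadicCube n k j = cubeOf n k x := by
  have := mem_iff.1 hx
  unfold cubeOf
  exact congrArg (DyadicCube n k) (funext this)

lemma isDyadicCube_cubeOf (k : ℤ) (x : Fin n → ℝ) : IsDyadicCube (cubeOf n k x) :=
  ⟨k, _, rfl⟩

/-- 1-dimensional dichotomy -/
lemma interval_subset {k' k a b : ℤ} (hk : k' ≤ k) {x : ℝ}
    (hb : (b:ℝ) / 2 ^ k' ≤ x ∧ x < ((b:ℝ)+1) / 2 ^ k')
    (ha : (a:ℝ) / 2 ^ k ≤ x ∧ x < ((a:ℝ)+1) / 2 ^ k) :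
    ∀ y : ℝ, (a:ℝ) / 2 ^ k ≤ y ∧ y < ((a:ℝ)+1) / 2 ^ k →
      (b:ℝ) / 2 ^ k' ≤ y ∧ y < ((b:ℝ)+1) / 2 ^ k' := by
  set m : ℕ := (k - k').toNat with hm
  have hkm : (k : ℤ) = k' + m := by omega
  set B : ℤ := b * 2 ^ m with hB
  set B' : ℤ := (b + 1) * 2 ^ m with hB'
  have hBr : (B:ℝ) / 2 ^ k = (b:ℝ) / 2 ^ k' := by
    rw [hB, hkm]
    push_cast
    rw [zpow_add₀ (by norm_num : (2:ℝ) ≠ 0)]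
    rw [zpow_natCast]
    field_simp
  have hB'r : (B':ℝ) / 2 ^ k = ((b:ℝ)+1) / 2 ^ k' := by
    rw [hB', hkm]
    push_cast
    rw [zpow_add₀ (by norm_num : (2:ℝ) ≠ 0)]
    rw [zpow_natCast]
    field_simp
  -- from x in both: B ≤ a and a + 1 ≤ B'
  have h1 : (B:ℝ)/2^k < ((a:ℝ)+1)/2^k := lt_of_le_of_lt (hBr ▸ hb.1) ha.2
  have h2 : (a:ℝ)/2^k < (B':ℝ)/2^k := lt_of_le_of_lt ha.1 (hB'r ▸ hb.2)
  have hBa : B ≤ a := by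
    have := (div_lt_div_iff_of_pos_right (two_zpow_pos k)).1 h1
    exact_mod_cast Int.lt_add_one_iff.1 (by exact_mod_cast this)
  have haB' : a + 1 ≤ B' := by
    have := (div_lt_div_iff_of_pos_right (two_zpow_pos k)).1 h2
    exact_mod_cast this
  intro y hy
  constructor
  · rw [← hBr]
    refine le_trans ?_ hy.1
    rw [div_le_div_iff_of_pos_right (two_zpow_pos k)]
    exact_mod_cast hBa
  · rw [← hB'r]
    refine lt_of_lt_of_le hy.2 ?_
    rw [div_le_div_iff_of_pos_right (two_zpow_pos k)]
    exact_mod_cast haB'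

/-- dyadic dichotomy: if a point lies in two cubes with `k' ≤ k`, the finer cube is inside
the coarser one. -/
lemma cube_subset {k' k : ℤ} {j' j : Fin n → ℤ} (hk : k' ≤ k) {x : Fin n → ℝ}
    (hx' : x ∈ DyadicCube n k' j') (hx : x ∈ DyadicCube n k j) :
    DyadicCube n k j ⊆ DyadicCube n k' j' := by
  intro y hy i
  exact interval_subset hk (hx' i) (hx i) (y i) (hy i)

lemma measurableSet_cube {k : ℤ} {j : Fin n → ℤ} : MeasurableSet (DyadicCube n k j) := by
  have : DyadicCube n k j = Set.pi Set.univ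
      (fun i => Set.Ico ((j i : ℝ) / 2 ^ k) (((j i : ℝ)+1) / 2 ^ k)) := by
    ext x; simp [DyadicCube, Set.mem_pi, Set.mem_Ico]
  rw [this]
  exact MeasurableSet.univ_pi fun i => measurableSet_Ico

lemma measurableSet_isDyadicCube {Q : Set (Fin n → ℝ)} (hQ : IsDyadicCube Q) :
    MeasurableSet Q := by
  obtain ⟨k, j, rfl⟩ := hQ; exact measurableSet_cube

lemma isBounded_cube {k : ℤ} {j : Fin n → ℤ} :
    Bornology.IsBounded (DyadicCube n k j) := by
  have h : DyadicCube n k j ⊆ Set.pi Set.univ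
      (fun i => Set.Icc ((j i : ℝ) / 2 ^ k) (((j i : ℝ)+1) / 2 ^ k)) := by
    intro x hx i _
    exact ⟨(hx i).1, le_of_lt (hx i).2⟩
  refine Bornology.IsBounded.subset ?_ h
  exact Bornology.IsBounded.pi fun i => Metric.isBounded_Icc _ _

lemma measure_cube_lt_top (ν : Measure (Fin n → ℝ)) [IsLocallyFiniteMeasure ν]
    {Q : Set (Fin n → ℝ)} (hQ : IsDyadicCube Q) : ν Q < ∞ := by
  obtain ⟨k, j, rfl⟩ := hQ
  calc ν (DyadicCube n k j) ≤ ν (closure (DyadicCube n k j)) := measure_mono subset_closure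
  _ < ∞ := (isBounded_cube.isCompact_closure).measure_lt_top

instance : Countable {Q : Set (Fin n → ℝ) // IsDyadicCube Q} := by
  have : {Q : Set (Fin n → ℝ) | IsDyadicCube Q} =
      Set.range (fun p : ℤ × (Fin n → ℤ) => DyadicCube n p.1 p.2) := by
    ext Q
    constructor
    · rintro ⟨k, j, rfl⟩; exact ⟨(k, j), rfl⟩
    · rintro ⟨⟨k, j⟩, rfl⟩; exact ⟨k, j, rfl⟩
  have hc : {Q : Set (Fin n → ℝ) | IsDyadicCube Q}.Countable := by
    rw [this]; exact Set.countable_range _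
  exact hc.to_subtype


lemma eq_floor_of_mem {k : ℤ} {j : Fin n → ℤ} {x : Fin n → ℝ}
    (hx : x ∈ DyadicCube n k j) : j = fun i => ⌊x i * 2 ^ k⌋ :=
  funext (mem_iff.1 hx)

lemma cubeOf_eq_cubeOf {k : ℤ} {x y : Fin n → ℝ} (hy : y ∈ cubeOf n k x) :
    cubeOf n k x = cubeOf n k y := eq_cubeOf_of_mem hy


abbrev Cubes (n : ℕ) := {Q : Set (Fin n → ℝ) // IsDyadicCube Q}

lemma lintegral_tsum_indicator (ν : Measure (Fin n → ℝ)) (c : Cubes n → ℝ≥0∞) :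
    ∫⁻ x, (∑' Q : Cubes n, Set.indicator Q.1 (fun _ => c Q) x) ∂ν
      = ∑' Q : Cubes n, c Q * ν Q.1 := by
  rw [lintegral_tsum fun Q =>
    ((measurable_const.indicator (measurableSet_isDyadicCube Q.2)).aemeasurable)]
  refine tsum_congr fun Q => ?_
  rw [lintegral_indicator (measurableSet_isDyadicCube Q.2), setLIntegral_const]

lemma lintegral_tsum_indicator_mul (ν : Measure (Fin n → ℝ)) (c : Cubes n → ℝ≥0∞)
    {h : (Fin n → ℝ) → ℝ≥0∞} (hh : Measurable h) :
    ∫⁻ x, (∑' Q : Cubes n, Set.indicator Q.1 (fun _ => c Q) x) * h x ∂ν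
      = ∑' Q : Cubes n, c Q * ∫⁻ y in Q.1, h y ∂ν := by
  have h1 : ∀ x, (∑' Q : Cubes n, Set.indicator Q.1 (fun _ => c Q) x) * h x
      = ∑' Q : Cubes n, Set.indicator Q.1 (fun y => c Q * h y) x := by
    intro x
    rw [← ENNReal.tsum_mul_right]
    exact tsum_congr fun Q => (Set.indicator_mul_left Q.1 (fun _ => c Q) h).symm
  simp_rw [h1]
  rw [lintegral_tsum fun Q => ((Measurable.indicator (f := fun y => c Q * h y) (measurable_const.mul hh)
    (measurableSet_isDyadicCube Q.2)).aemeasurable)]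
  refine tsum_congr fun Q => ?_
  rw [lintegral_indicator (measurableSet_isDyadicCube Q.2), lintegral_const_mul _ hh]

lemma measurable_tsum_indicator (c : Cubes n → ℝ≥0∞) :
    Measurable (fun x => ∑' Q : Cubes n, Set.indicator Q.1 (fun _ => c Q) x) :=
  Measurable.ennreal_tsum fun Q =>
    measurable_const.indicator (measurableSet_isDyadicCube Q.2)

/-- Hölder on a single cube -/
lemma holder_cube (σ : Measure (Fin n → ℝ)) {q : ℝ} (hq : 1 < q)
    {f : (Fin n → ℝ) → ℝ≥0∞} (hf : Measurable f) (Q : Set (Fin n → ℝ))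
    (hQ : MeasurableSet Q) :
    (∫⁻ y in Q, f y ∂σ) ^ q ≤ σ Q ^ (q - 1) * ∫⁻ y in Q, f y ^ q ∂σ := by
  have hq0 : (0:ℝ) < q := lt_trans one_pos hq
  have hcon : q.HolderConjugate (q / (q - 1)) :=
    (Real.holderConjugate_iff_eq_conjExponent hq).2 rfl
  have H := ENNReal.lintegral_mul_le_Lp_mul_Lq (σ.restrict Q) hcon
    hf.aemeasurable (measurable_const (a := (1:ℝ≥0∞))).aemeasurable
  simp only [Pi.mul_apply, mul_one, ENNReal.one_rpow, lintegral_const,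
    Measure.restrict_apply MeasurableSet.univ, Set.univ_inter, one_mul] at H
  have H2 := ENNReal.rpow_le_rpow H (le_of_lt hq0)
  calc (∫⁻ y in Q, f y ∂σ) ^ q
      ≤ ((∫⁻ a in Q, f a ^ q ∂σ) ^ (1/q) * (σ Q) ^ (1/(q/(q-1)))) ^ q := H2
    _ = σ Q ^ (q - 1) * ∫⁻ y in Q, f y ^ q ∂σ := by
        rw [ENNReal.mul_rpow_of_nonneg _ _ (le_of_lt hq0), ← ENNReal.rpow_mul,
          ← ENNReal.rpow_mul]
        rw [one_div_mul_cancel (ne_of_gt hq0)]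
        have : 1/(q/(q-1)) * q = q - 1 := by field_simp
        rw [this, ENNReal.rpow_one, mul_comm]

theorem sufficiency (σ μ : Measure (Fin n → ℝ))
    [IsLocallyFiniteMeasure σ] [IsLocallyFiniteMeasure μ]
    (lam : Set (Fin n → ℝ) → ℝ≥0∞)
    (p q : ℝ) (hq : 1 < q) (hqp : q < p)
    (hA : (∫⁻ x, (∑' Q : Cubes n,
        Set.indicator Q.1 (fun _ => lam Q.1 ^ q * σ Q.1 ^ (q - 1) * μ Q.1) x)
          ^ (p / (p - q)) ∂σ) ≠ ∞) :
    (∃ C : ℝ≥0∞, C ≠ ∞ ∧ ∀ f : (Fin n → ℝ) → ℝ≥0∞, Measurable f →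
      (∫⁻ x, (∑' Q : Cubes n,
          Set.indicator Q.1 (fun _ => lam Q.1 ^ q * (∫⁻ y in Q.1, f y ∂σ) ^ q) x) ∂μ) ^ (1 / q)
        ≤ C * (∫⁻ x, f x ^ p ∂σ) ^ (1 / p)) := by
  have hq0 : (0:ℝ) < q := lt_trans one_pos hq
  have hp0 : (0:ℝ) < p := lt_trans hq0 hqp
  set r : ℝ := p / q with hr_def
  set r' : ℝ := p / (p - q) with hr'_def
  have hr1 : 1 < r := (one_lt_div hq0).2 hqp
  have hrr' : r.HolderConjugate r' := by
    rw [Real.holderConjugate_iff]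
    constructor
    · exact hr1
    · rw [hr_def, hr'_def]
      rw [inv_div, inv_div]
      field_simp
      ring
  set c : Cubes n → ℝ≥0∞ := fun Q => lam Q.1 ^ q * σ Q.1 ^ (q - 1) * μ Q.1 with hc_def
  set G : (Fin n → ℝ) → ℝ≥0∞ :=
    fun x => ∑' Q : Cubes n, Set.indicator Q.1 (fun _ => c Q) x with hG_def
  set A : ℝ≥0∞ := ∫⁻ x, G x ^ r' ∂σ with hA_def
  have hr'0 : (0:ℝ) < r' := div_pos hp0 (by linarith)
  refine ⟨(A ^ (1/r')) ^ (1/q), ?_, ?_⟩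
  · exact ENNReal.rpow_ne_top_of_nonneg (by positivity)
      (ENNReal.rpow_ne_top_of_nonneg (by positivity) hA)
  intro f hf
  set B : ℝ≥0∞ := ∫⁻ x, f x ^ p ∂σ with hB_def
  have key : (∫⁻ x, (∑' Q : Cubes n,
      Set.indicator Q.1 (fun _ => lam Q.1 ^ q * (∫⁻ y in Q.1, f y ∂σ) ^ q) x) ∂μ)
      ≤ A ^ (1/r') * B ^ (1/r) := by
    rw [lintegral_tsum_indicator]
    calc ∑' Q : Cubes n, lam Q.1 ^ q * (∫⁻ y in Q.1, f y ∂σ) ^ q * μ Q.1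
        ≤ ∑' Q : Cubes n, c Q * ∫⁻ y in Q.1, f y ^ q ∂σ := by
          refine ENNReal.tsum_le_tsum fun Q => ?_
          rw [hc_def]
          calc lam Q.1 ^ q * (∫⁻ y in Q.1, f y ∂σ) ^ q * μ Q.1
              ≤ lam Q.1 ^ q * (σ Q.1 ^ (q - 1) * ∫⁻ y in Q.1, f y ^ q ∂σ) * μ Q.1 := by
                gcongr
                exact holder_cube σ hq hf Q.1 (measurableSet_isDyadicCube Q.2)
            _ = lam Q.1 ^ q * σ Q.1 ^ (q - 1) * μ Q.1 * ∫⁻ y in Q.1, f y ^ q ∂σ := by ring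
      _ = ∫⁻ x, G x * f x ^ q ∂σ := by
          rw [lintegral_tsum_indicator_mul σ c (hf.pow_const q)]
      _ ≤ (∫⁻ x, G x ^ r' ∂σ) ^ (1/r') * (∫⁻ x, (f x ^ q) ^ r ∂σ) ^ (1/r) := by
          have := ENNReal.lintegral_mul_le_Lp_mul_Lq σ hrr'.symm
            (measurable_tsum_indicator c).aemeasurable
            ((hf.pow_const q).aemeasurable)
          simpa using this
      _ = A ^ (1/r') * B ^ (1/r) := by
          congr 1
          rw [hB_def]
          congr 1
          refine lintegral_congr fun x => ?_
          rw [← ENNReal.rpow_mul]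
          congr 1
          rw [hr_def]
          field_simp
  calc (∫⁻ x, (∑' Q : Cubes n,
      Set.indicator Q.1 (fun _ => lam Q.1 ^ q * (∫⁻ y in Q.1, f y ∂σ) ^ q) x) ∂μ) ^ (1/q)
      ≤ (A ^ (1/r') * B ^ (1/r)) ^ (1/q) :=
        ENNReal.rpow_le_rpow key (by positivity)
    _ = (A ^ (1/r')) ^ (1/q) * B ^ (1/p) := by
        rw [ENNReal.mul_rpow_of_nonneg _ _ (by positivity), ← ENNReal.rpow_mul B]
        congr 2
        rw [hr_def]
        field_simp

variable (σ : Measure (Fin n → ℝ))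

/-- average of `h` on the generation-`k` dyadic cube containing `x` -/
def avg (k : ℤ) (h : (Fin n → ℝ) → ℝ≥0∞) (x : Fin n → ℝ) : ℝ≥0∞ :=
  (σ (cubeOf n k x))⁻¹ * ∫⁻ y in cubeOf n k x, h y ∂σ

/-- the dyadic maximal function -/
def maxF (h : (Fin n → ℝ) → ℝ≥0∞) (x : Fin n → ℝ) : ℝ≥0∞ :=
  ⨆ k : ℤ, avg σ k h x

lemma measurable_avg (k : ℤ) (h : (Fin n → ℝ) → ℝ≥0∞) :
    Measurable (avg σ k h) := by
  have heq : avg σ k h = fun x => ∑' j : Fin n → ℤ,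
      Set.indicator (DyadicCube n k j)
        (fun _ => (σ (DyadicCube n k j))⁻¹ * ∫⁻ y in DyadicCube n k j, h y ∂σ) x := by
    funext x
    rw [eq_comm]
    have hx : x ∈ DyadicCube n k (fun i => ⌊x i * 2 ^ k⌋) := mem_cubeOf k x
    refine (tsum_eq_single (fun i => ⌊x i * 2 ^ k⌋) ?_).trans ?_
    · intro j hj
      apply Set.indicator_of_notMem
      intro hxj
      exact hj (eq_floor_of_mem hxj)
    · rw [Set.indicator_of_mem hx]
      rfl
  rw [heq]
  exact Measurable.ennreal_tsum fun j => measurable_const.indicator measurableSet_cube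

lemma measurable_maxF (h : (Fin n → ℝ) → ℝ≥0∞) : Measurable (maxF σ h) :=
  Measurable.iSup fun k => measurable_avg σ k h

lemma avg_le_maxF (k : ℤ) (h : (Fin n → ℝ) → ℝ≥0∞) (x : Fin n → ℝ) :
    avg σ k h x ≤ maxF σ h x := le_iSup (fun k => avg σ k h x) k

/-- on a dyadic cube, the average over that cube is below the maximal function -/
lemma cube_avg_le_maxF {Q : Set (Fin n → ℝ)} (hQ : IsDyadicCube Q)
    (h : (Fin n → ℝ) → ℝ≥0∞) {x : Fin n → ℝ} (hx : x ∈ Q) :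
    (σ Q)⁻¹ * ∫⁻ y in Q, h y ∂σ ≤ maxF σ h x := by
  obtain ⟨k, j, rfl⟩ := hQ
  have hQx : DyadicCube n k j = cubeOf n k x := eq_cubeOf_of_mem hx
  calc (σ (DyadicCube n k j))⁻¹ * ∫⁻ y in DyadicCube n k j, h y ∂σ
      = avg σ k h x := by rw [avg, ← hQx]
    _ ≤ maxF σ h x := avg_le_maxF σ k h x

lemma maxF_mono {h h' : (Fin n → ℝ) → ℝ≥0∞} (hle : ∀ y, h y ≤ h' y) (x : Fin n → ℝ) :
    maxF σ h x ≤ maxF σ h' x := by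
  refine iSup_mono fun k => ?_
  exact mul_le_mul_right (lintegral_mono fun y => hle y) _

lemma maxF_const_le (a : ℝ≥0∞) (x : Fin n → ℝ) : maxF σ (fun _ => a) x ≤ a := by
  refine iSup_le fun k => ?_
  rw [avg, setLIntegral_const]
  calc (σ (cubeOf n k x))⁻¹ * (a * σ (cubeOf n k x))
      = a * ((σ (cubeOf n k x))⁻¹ * σ (cubeOf n k x)) := by ring
    _ ≤ a * 1 := by
        gcongr
        exact ENNReal.inv_mul_le_one _
    _ = a := mul_one a

lemma maxF_add_le {h h' : (Fin n → ℝ) → ℝ≥0∞} (hh : Measurable h)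
    (x : Fin n → ℝ) :
    maxF σ (fun y => h y + h' y) x ≤ maxF σ h x + maxF σ h' x := by
  refine iSup_le fun k => ?_
  rw [avg, lintegral_add_left hh, mul_add]
  exact add_le_add (avg_le_maxF σ k h x) (avg_le_maxF σ k h' x)

variable [IsLocallyFiniteMeasure σ]

/-- the dyadic maximal function is of weak type (1,1) -/
theorem weak_type {h : (Fin n → ℝ) → ℝ≥0∞} (hh : Measurable h)
    {s : ℝ≥0∞} (hs0 : s ≠ 0) (hstop : s ≠ ∞) :
    σ {x | s < maxF σ h x} ≤ s⁻¹ * ∫⁻ y, h y ∂σ := by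
  set E : ℕ → Set (Fin n → ℝ) :=
    fun m => {x | ∃ k : ℤ, -(m:ℤ) ≤ k ∧ s < avg σ k h x} with hE
  have hmono : Monotone E := by
    intro m m' hmm' x ⟨k, hk, hs⟩
    exact ⟨k, le_trans (by exact_mod_cast neg_le_neg (Int.ofNat_le.2 hmm')) hk, hs⟩
  have hunion : {x | s < maxF σ h x} = ⋃ m, E m := by
    ext x
    simp only [Set.mem_setOf_eq, maxF, lt_iSup_iff, Set.mem_iUnion, hE]
    constructor
    · rintro ⟨k, hk⟩
      exact ⟨(-k).toNat, k, by omega, hk⟩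
    · rintro ⟨m, k, _, hk⟩
      exact ⟨k, hk⟩
  rw [hunion, (hmono.directed_le).measure_iUnion]
  refine iSup_le fun m => ?_
  -- the key covering argument on E m
  classical
  set P : (Fin n → ℝ) → ℤ → Prop := fun x k => -(m:ℤ) ≤ k ∧ s < avg σ k h x with hP
  have hex : ∀ x ∈ E m, ∃ lb : ℤ, P x lb ∧ ∀ z : ℤ, P x z → lb ≤ z := by
    intro x hx
    exact Int.exists_least_of_bdd ⟨-(m:ℤ), fun z hz => hz.1⟩ hx
  choose! κ hκ hκmin using hex
  set 𝒞 : Set (Set (Fin n → ℝ)) := (fun x => cubeOf n (κ x) x) '' E m with hC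
  -- cubes in 𝒞 are dyadic
  have hdy : ∀ Q ∈ 𝒞, IsDyadicCube Q := by
    rintro Q ⟨x, hx, rfl⟩
    exact isDyadicCube_cubeOf _ x
  -- every point of a selected cube is in E m, and E m is the union
  have hsub : ∀ x ∈ E m, cubeOf n (κ x) x ⊆ E m := by
    intro x hx y hy
    have : cubeOf n (κ x) x = cubeOf n (κ x) y := cubeOf_eq_cubeOf hy
    refine ⟨κ x, (hκ x hx).1, ?_⟩
    have h2 := (hκ x hx).2
    simp only [avg] at h2 ⊢
    rwa [← this]
  have hEeq : E m = ⋃₀ 𝒞 := by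
    apply Set.Subset.antisymm
    · intro x hx
      exact ⟨cubeOf n (κ x) x, ⟨x, hx, rfl⟩, mem_cubeOf _ x⟩
    · rintro y ⟨Q, ⟨x, hx, rfl⟩, hy⟩
      exact hsub x hx hy
  -- selected cubes are equal or disjoint
  have hdisj : ∀ x ∈ E m, ∀ y ∈ E m,
      cubeOf n (κ x) x ≠ cubeOf n (κ y) y →
      Disjoint (cubeOf n (κ x) x) (cubeOf n (κ y) y) := by
    have key : ∀ x ∈ E m, ∀ y ∈ E m, κ x ≤ κ y →
        ∀ z, z ∈ cubeOf n (κ x) x → z ∈ cubeOf n (κ y) y →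
        cubeOf n (κ x) x = cubeOf n (κ y) y := by
      intro x hx y hy hκle z hz1 hz2
      have hsub2 : cubeOf n (κ y) y ⊆ cubeOf n (κ x) x :=
        cube_subset hκle hz1 hz2
      have hyx : y ∈ cubeOf n (κ x) x := hsub2 (mem_cubeOf _ y)
      have hcube : cubeOf n (κ x) x = cubeOf n (κ x) y := cubeOf_eq_cubeOf hyx
      have hPy : P y (κ x) := by
        refine ⟨(hκ x hx).1, ?_⟩
        have h2 := (hκ x hx).2
        simp only [avg] at h2 ⊢
        rwa [← hcube]
      have : κ y ≤ κ x := hκmin y hy (κ x) hPy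
      have hκeq : κ x = κ y := le_antisymm hκle this
      rw [hcube, hκeq]
    intro x hx y hy hne
    rw [Set.disjoint_left]
    intro z hz1 hz2
    rcases le_total (κ x) (κ y) with hle | hle
    · exact hne (key x hx y hy hle z hz1 hz2)
    · exact hne ((key y hy x hx hle z hz2 hz1).symm)
  -- countability
  have hcnt : 𝒞.Countable := by
    have : 𝒞 ⊆ {Q : Set (Fin n → ℝ) | IsDyadicCube Q} := hdy
    refine Set.Countable.mono this ?_
    exact Set.countable_coe_iff.mp (inferInstance : Countable {Q : Set (Fin n → ℝ) // IsDyadicCube Q})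
  have := hcnt.to_subtype
  have hd : Pairwise (Function.onFun Disjoint (fun Q : 𝒞 => (Q : Set (Fin n → ℝ)))) := by
    rintro ⟨Q, hQ⟩ ⟨Q', hQ'⟩ hne
    obtain ⟨x, hx, rfl⟩ := hQ
    obtain ⟨y, hy, rfl⟩ := hQ'
    exact hdisj x hx y hy fun e => hne (Subtype.ext e)
  -- measure estimate
  have hQbound : ∀ Q ∈ 𝒞, σ Q ≤ s⁻¹ * ∫⁻ y in Q, h y ∂σ := by
    rintro Q ⟨x, hx, rfl⟩
    set Q := cubeOf n (κ x) x
    have havg : s < (σ Q)⁻¹ * ∫⁻ y in Q, h y ∂σ := (hκ x hx).2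
    rcases eq_or_ne (σ Q) 0 with h0 | h0
    · rw [h0]; exact zero_le
    have htop : σ Q ≠ ∞ := (measure_cube_lt_top σ (isDyadicCube_cubeOf _ x)).ne
    have h1 : s * σ Q ≤ ∫⁻ y in Q, h y ∂σ := by
      calc s * σ Q ≤ ((σ Q)⁻¹ * ∫⁻ y in Q, h y ∂σ) * σ Q :=
            mul_le_mul_left havg.le _
        _ = (∫⁻ y in Q, h y ∂σ) * ((σ Q)⁻¹ * σ Q) := by ring
        _ = ∫⁻ y in Q, h y ∂σ := by
            rw [ENNReal.inv_mul_cancel h0 htop, mul_one]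
    calc σ Q = s⁻¹ * (s * σ Q) := by
          rw [← mul_assoc, ENNReal.inv_mul_cancel hs0 hstop, one_mul]
      _ ≤ s⁻¹ * ∫⁻ y in Q, h y ∂σ := mul_le_mul_right h1 _
  calc σ (E m) = σ (⋃ Q : 𝒞, (Q : Set (Fin n → ℝ))) := by
        rw [hEeq, Set.sUnion_eq_iUnion]
    _ ≤ ∑' Q : 𝒞, σ (Q : Set (Fin n → ℝ)) := measure_iUnion_le _
    _ ≤ ∑' Q : 𝒞, s⁻¹ * ∫⁻ y in (Q : Set (Fin n → ℝ)), h y ∂σ :=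
        ENNReal.tsum_le_tsum fun Q => hQbound Q.1 Q.2
    _ = s⁻¹ * ∑' Q : 𝒞, ∫⁻ y in (Q : Set (Fin n → ℝ)), h y ∂σ := by
        rw [ENNReal.tsum_mul_left]
    _ = s⁻¹ * ∫⁻ y in ⋃ Q : 𝒞, (Q : Set (Fin n → ℝ)), h y ∂σ := by
        congr 1
        rw [lintegral_iUnion (s := fun Q : 𝒞 => (Q : Set (Fin n → ℝ))) (fun Q => measurableSet_isDyadicCube (hdy Q.1 Q.2)) hd]
    _ ≤ s⁻¹ * ∫⁻ y, h y ∂σ := by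
        gcongr
        exact Measure.restrict_le_self

namespace Strong
open Real in
lemma two_rpow_ofReal (c : ℝ) : (2:ℝ≥0∞) ^ c = ENNReal.ofReal ((2:ℝ) ^ c) := by
  rw [← ENNReal.ofReal_rpow_of_pos two_pos]
  norm_num

lemma two_rpow_ne_top (c : ℝ) : (2:ℝ≥0∞) ^ c ≠ ∞ := by
  rw [two_rpow_ofReal]; exact ENNReal.ofReal_ne_top

lemma two_rpow_ne_zero (c : ℝ) : (2:ℝ≥0∞) ^ c ≠ 0 := by
  rw [two_rpow_ofReal]
  simp only [ne_eq, ENNReal.ofReal_eq_zero, not_le]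
  positivity

lemma layer_pt {r : ℝ} (hr : 0 < r) (a : ℝ≥0∞) :
    a ^ r ≤ (2:ℝ≥0∞) ^ r *
      ∑' k : ℤ, (if (2:ℝ≥0∞) ^ (k:ℝ) < a then (2:ℝ≥0∞) ^ ((k:ℝ) * r) else 0) := by
  classical
  rcases eq_or_ne a 0 with rfl | ha0
  · rw [ENNReal.zero_rpow_of_pos hr]; exact zero_le
  rcases eq_or_ne a ∞ with rfl | hatop
  · have h1 : ∑' k : ℤ, (if (2:ℝ≥0∞) ^ (k:ℝ) < (∞:ℝ≥0∞)
        then (2:ℝ≥0∞) ^ ((k:ℝ) * r) else 0) = ∞ := by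
      have heq : ∀ k : ℤ, (if (2:ℝ≥0∞) ^ (k:ℝ) < (∞:ℝ≥0∞)
          then (2:ℝ≥0∞) ^ ((k:ℝ) * r) else 0) = (2:ℝ≥0∞) ^ ((k:ℝ) * r) := by
        intro k
        rw [if_pos (lt_top_iff_ne_top.2 (two_rpow_ne_top _))]
      simp_rw [heq]
      refine top_unique ?_
      calc (⊤:ℝ≥0∞) = ∑' _ : ℕ, (1:ℝ≥0∞) :=
            (ENNReal.tsum_const_eq_top_of_ne_zero one_ne_zero).symm
        _ ≤ ∑' m : ℕ, (2:ℝ≥0∞) ^ (((m:ℤ):ℝ) * r) := by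
            refine ENNReal.tsum_le_tsum fun m => ?_
            calc (1:ℝ≥0∞) = 2 ^ (0:ℝ) := by rw [ENNReal.rpow_zero]
              _ ≤ 2 ^ (((m:ℤ):ℝ) * r) :=
                ENNReal.rpow_le_rpow_of_exponent_le one_le_two (by positivity)
        _ ≤ _ := ENNReal.tsum_comp_le_tsum_of_injective (f := fun m : ℕ => (m:ℤ))
            (fun a b hab => by simpa using hab) (fun k : ℤ => (2:ℝ≥0∞) ^ ((k:ℝ) * r))
    rw [h1, ENNReal.mul_top (two_rpow_ne_zero r), ENNReal.top_rpow_of_pos hr]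
  -- main case : 0 < a < ∞
  set y : ℝ := a.toReal with hy_def
  have hy : 0 < y := ENNReal.toReal_pos ha0 hatop
  set L : ℝ := Real.logb 2 y with hL
  set K : ℤ := ⌈L⌉ - 1 with hK
  have h2L : (2:ℝ) ^ L = y := Real.rpow_logb two_pos (by norm_num) hy
  have h2K : (2:ℝ) ^ (K:ℝ) < y := by
    have hKL : (K:ℝ) < L := by
      push_cast [hK]
      have := Int.ceil_lt_add_one (R := ℝ) L
      linarith
    calc (2:ℝ) ^ (K:ℝ) < 2 ^ L := Real.rpow_lt_rpow_of_exponent_lt one_lt_two hKL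
      _ = y := h2L
  have hyK : y ≤ (2:ℝ) ^ ((K:ℝ) + 1) := by
    have hLK : L ≤ (K:ℝ) + 1 := by
      push_cast [hK]
      have := Int.le_ceil L
      linarith
    calc y = 2 ^ L := h2L.symm
      _ ≤ 2 ^ ((K:ℝ) + 1) := Real.rpow_le_rpow_of_exponent_le one_le_two hLK
  have ha1 : (2:ℝ≥0∞) ^ ((K:ℝ)) < a := by
    rw [two_rpow_ofReal, ← ENNReal.ofReal_toReal hatop]
    exact (ENNReal.ofReal_lt_ofReal_iff hy).2 h2K
  have ha2 : a ≤ (2:ℝ≥0∞) ^ ((K:ℝ) + 1) := by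
    rw [two_rpow_ofReal, ← ENNReal.ofReal_toReal hatop]
    exact ENNReal.ofReal_le_ofReal hyK
  calc a ^ r ≤ ((2:ℝ≥0∞) ^ ((K:ℝ) + 1)) ^ r := ENNReal.rpow_le_rpow ha2 hr.le
    _ = (2:ℝ≥0∞) ^ r * (2:ℝ≥0∞) ^ ((K:ℝ) * r) := by
        rw [← ENNReal.rpow_mul]
        have : ((K:ℝ) + 1) * r = r + (K:ℝ) * r := by ring
        rw [this, ENNReal.rpow_add _ _ two_ne_zero ENNReal.ofNat_ne_top]
    _ ≤ _ := by
        gcongr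
        have : (2:ℝ≥0∞) ^ ((K:ℝ) * r) = (if (2:ℝ≥0∞) ^ (K:ℝ) < a
            then (2:ℝ≥0∞) ^ ((K:ℝ) * r) else 0) := (if_pos ha1).symm
        rw [this]
        exact ENNReal.le_tsum K

lemma geom_tail {r : ℝ} (hr : 1 < r) (a : ℝ≥0∞) :
    ∑' k : ℤ, (if (2:ℝ≥0∞) ^ ((k:ℝ) - 1) < a then (2:ℝ≥0∞) ^ ((k:ℝ) * (r-1)) else 0)
      ≤ (1 - (2:ℝ≥0∞) ^ (1 - r))⁻¹ * (2 * a) ^ (r - 1) := by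
  classical
  have hr1 : (0:ℝ) < r - 1 := by linarith
  rcases eq_or_ne a 0 with rfl | ha0
  · simp
  rcases eq_or_ne a ∞ with rfl | hatop
  · have h2 : ((2:ℝ≥0∞) * ⊤) ^ (r-1) = ⊤ := by
      rw [ENNReal.mul_top (by norm_num), ENNReal.top_rpow_of_pos hr1]
    have h1 : (1:ℝ≥0∞) - (2:ℝ≥0∞) ^ (1-r) ≠ ∞ :=
      (tsub_le_self.trans_lt (by norm_num : (1:ℝ≥0∞) < ∞)).ne
    rw [h2, ENNReal.mul_top (ENNReal.inv_ne_zero.2 h1)]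
    exact le_top
  set y : ℝ := a.toReal with hy_def
  have hy : 0 < y := ENNReal.toReal_pos ha0 hatop
  set L : ℝ := Real.logb 2 y with hL
  set K : ℤ := ⌈L⌉ with hK
  have h2L : (2:ℝ) ^ L = y := Real.rpow_logb two_pos (by norm_num) hy
  -- term-wise bound by the geometric cut-off
  have hterm : ∀ k : ℤ, (if (2:ℝ≥0∞) ^ ((k:ℝ) - 1) < a then (2:ℝ≥0∞) ^ ((k:ℝ) * (r-1)) else 0)
      ≤ (if k ≤ K then (2:ℝ≥0∞) ^ ((k:ℝ) * (r-1)) else 0) := by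
    intro k
    by_cases hc : (2:ℝ≥0∞) ^ ((k:ℝ) - 1) < a
    · rw [if_pos hc]
      have hkK : k ≤ K := by
        have h1 : (2:ℝ) ^ ((k:ℝ) - 1) < y := by
          rw [two_rpow_ofReal, ← ENNReal.ofReal_toReal hatop] at hc
          exact (ENNReal.ofReal_lt_ofReal_iff hy).1 hc
        have h2 : (k:ℝ) - 1 < L := by
          have := Real.rpow_lt_rpow_left_iff (x := (2:ℝ)) one_lt_two
            (y := (k:ℝ) - 1) (z := L)
          rw [← h2L] at h1
          exact this.1 h1
        have h3 : (k:ℝ) - 1 < (K:ℝ) := lt_of_lt_of_le h2 (by exact_mod_cast Int.le_ceil L)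
        have : (k:ℤ) - 1 < K := by exact_mod_cast h3
        omega
      rw [if_pos hkK]
    · rw [if_neg hc]
      exact zero_le
  refine le_trans (ENNReal.tsum_le_tsum hterm) ?_
  -- reindex over ℕ
  set g : ℤ → ℝ≥0∞ := fun k => if k ≤ K then (2:ℝ≥0∞) ^ ((k:ℝ) * (r-1)) else 0 with hg
  have hinj : Function.Injective (fun m : ℕ => K - (m:ℤ)) := by
    intro a b hab
    simpa using hab
  have hsupp : Function.support g ⊆ Set.range (fun m : ℕ => K - (m:ℤ)) := by
    intro k hk
    have hkK : k ≤ K := by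
      by_contra hcon
      exact hk (if_neg hcon)
    exact ⟨(K - k).toNat, by show K - ((K - k).toNat:ℤ) = k; omega⟩
  have hre : ∑' k : ℤ, g k = ∑' m : ℕ, g (K - (m:ℤ)) := (hinj.tsum_eq hsupp).symm
  rw [hre]
  have hterm2 : ∀ m : ℕ, g (K - (m:ℤ)) =
      (2:ℝ≥0∞) ^ ((K:ℝ) * (r-1)) * ((2:ℝ≥0∞) ^ (1 - r)) ^ (m:ℕ) := by
    intro m
    have hle : K - (m:ℤ) ≤ K := by omega
    rw [hg]
    simp only [if_pos hle]
    rw [← ENNReal.rpow_natCast ((2:ℝ≥0∞) ^ (1-r)) m, ← ENNReal.rpow_mul,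
      ← ENNReal.rpow_add _ _ two_ne_zero ENNReal.ofNat_ne_top]
    congr 1
    push_cast
    ring
  simp_rw [hterm2]
  rw [ENNReal.tsum_mul_left, ENNReal.tsum_geometric]
  rw [mul_comm]
  gcongr
  -- 2 ^ (K (r-1)) ≤ (2 a) ^ (r - 1)
  have h2K : (2:ℝ≥0∞) ^ ((K:ℝ)) ≤ 2 * a := by
    have hyK : (2:ℝ) ^ ((K:ℝ)) ≤ 2 * y := by
      have hLK : (K:ℝ) ≤ L + 1 := by
        have := Int.ceil_lt_add_one (R := ℝ) L
        rw [hK]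
        push_cast
        linarith
      calc (2:ℝ) ^ ((K:ℝ)) ≤ 2 ^ (L + 1) :=
            Real.rpow_le_rpow_of_exponent_le one_le_two hLK
        _ = 2 * y := by
            rw [Real.rpow_add two_pos, h2L, Real.rpow_one]
            ring
    rw [two_rpow_ofReal]
    calc ENNReal.ofReal ((2:ℝ) ^ (K:ℝ)) ≤ ENNReal.ofReal (2 * y) :=
          ENNReal.ofReal_le_ofReal hyK
      _ = 2 * a := by
          rw [ENNReal.ofReal_mul (by norm_num)]
          rw [ENNReal.ofReal_ofNat, ENNReal.ofReal_toReal hatop]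
  calc (2:ℝ≥0∞) ^ ((K:ℝ) * (r-1)) = ((2:ℝ≥0∞) ^ ((K:ℝ))) ^ (r-1) := by
        rw [← ENNReal.rpow_mul]
    _ ≤ (2 * a) ^ (r-1) := ENNReal.rpow_le_rpow h2K hr1.le

end Strong

open Strong
variable {n : ℕ} (σ : Measure (Fin n → ℝ)) [IsLocallyFiniteMeasure σ]

theorem strong_type {r : ℝ} (hr : 1 < r) {h : (Fin n → ℝ) → ℝ≥0∞} (hh : Measurable h) :
    ∫⁻ x, maxF σ h x ^ r ∂σ ≤
      (2:ℝ≥0∞) ^ r * 2 * ((1 - (2:ℝ≥0∞) ^ (1-r))⁻¹ * (2:ℝ≥0∞) ^ (r-1)) *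
        ∫⁻ x, h x ^ r ∂σ := by
  classical
  have hr0 : (0:ℝ) < r := lt_trans one_pos hr
  have hr1 : (0:ℝ) ≤ r - 1 := by linarith
  set F := maxF σ h with hF_def
  have hF : Measurable F := measurable_maxF σ h
  set hcut : ℤ → (Fin n → ℝ) → ℝ≥0∞ :=
    fun k y => Set.indicator {y | (2:ℝ≥0∞) ^ ((k:ℝ) - 1) < h y} h y with hcut_def
  have hcut_meas : ∀ k : ℤ, Measurable (hcut k) := fun k =>
    hh.indicator (measurableSet_lt measurable_const hh)
  have step1 : ∫⁻ x, F x ^ r ∂σ ≤ (2:ℝ≥0∞) ^ r *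
      ∑' k : ℤ, (2:ℝ≥0∞) ^ ((k:ℝ) * r) * σ {x | (2:ℝ≥0∞) ^ (k:ℝ) < F x} := by
    calc ∫⁻ x, F x ^ r ∂σ
        ≤ ∫⁻ x, (2:ℝ≥0∞) ^ r * ∑' k : ℤ,
            Set.indicator {x | (2:ℝ≥0∞) ^ (k:ℝ) < F x}
              (fun _ => (2:ℝ≥0∞) ^ ((k:ℝ) * r)) x ∂σ := by
          refine lintegral_mono fun x => ?_
          refine le_trans (layer_pt hr0 (F x)) (le_of_eq ?_)
          congr 1
          refine tsum_congr fun k => ?_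
          rw [Set.indicator_apply]
          rfl
      _ = (2:ℝ≥0∞) ^ r * ∑' k : ℤ, (2:ℝ≥0∞) ^ ((k:ℝ) * r) *
            σ {x | (2:ℝ≥0∞) ^ (k:ℝ) < F x} := by
          rw [lintegral_const_mul _ (Measurable.ennreal_tsum fun k =>
            measurable_const.indicator (measurableSet_lt measurable_const hF))]
          congr 1
          rw [lintegral_tsum fun k => (measurable_const.indicator
            (measurableSet_lt measurable_const hF)).aemeasurable]
          refine tsum_congr fun k => ?_
          rw [lintegral_indicator (measurableSet_lt measurable_const hF),
            setLIntegral_const]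
  have step2 : ∀ k : ℤ, σ {x | (2:ℝ≥0∞) ^ (k:ℝ) < F x}
      ≤ ((2:ℝ≥0∞) ^ ((k:ℝ) - 1))⁻¹ * ∫⁻ y, hcut k y ∂σ := by
    intro k
    have hsplit : ∀ x, F x ≤ maxF σ (hcut k) x + (2:ℝ≥0∞) ^ ((k:ℝ) - 1) := by
      intro x
      have hle : ∀ y, h y ≤ hcut k y + (2:ℝ≥0∞) ^ ((k:ℝ) - 1) := by
        intro y
        by_cases hy : (2:ℝ≥0∞) ^ ((k:ℝ) - 1) < h y
        · rw [hcut_def]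
          simp only [Set.indicator_apply, Set.mem_setOf_eq, if_pos hy]
          exact le_self_add
        · push_neg at hy
          exact le_trans hy le_add_self
      calc F x ≤ maxF σ (fun y => hcut k y + (2:ℝ≥0∞) ^ ((k:ℝ) - 1)) x :=
            maxF_mono σ hle x
        _ ≤ maxF σ (hcut k) x + maxF σ (fun _ => (2:ℝ≥0∞) ^ ((k:ℝ) - 1)) x :=
            maxF_add_le σ (hcut_meas k) x
        _ ≤ maxF σ (hcut k) x + (2:ℝ≥0∞) ^ ((k:ℝ) - 1) :=
            add_le_add_right (maxF_const_le σ _ x) _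
    have h2 : (2:ℝ≥0∞) ^ ((k:ℝ) - 1) + (2:ℝ≥0∞) ^ ((k:ℝ) - 1) = (2:ℝ≥0∞) ^ (k:ℝ) := by
      calc (2:ℝ≥0∞) ^ ((k:ℝ) - 1) + (2:ℝ≥0∞) ^ ((k:ℝ) - 1)
          = (2:ℝ≥0∞) ^ (1:ℝ) * (2:ℝ≥0∞) ^ ((k:ℝ) - 1) := by
            rw [ENNReal.rpow_one, two_mul]
        _ = (2:ℝ≥0∞) ^ (1 + ((k:ℝ) - 1)) :=
            (ENNReal.rpow_add _ _ two_ne_zero ENNReal.ofNat_ne_top).symm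
        _ = (2:ℝ≥0∞) ^ (k:ℝ) := by congr 1; ring
    have hsubset : {x | (2:ℝ≥0∞) ^ (k:ℝ) < F x} ⊆
        {x | (2:ℝ≥0∞) ^ ((k:ℝ) - 1) < maxF σ (hcut k) x} := by
      intro x hx
      simp only [Set.mem_setOf_eq] at hx ⊢
      by_contra hcon
      push_neg at hcon
      have hFle : F x ≤ (2:ℝ≥0∞) ^ (k:ℝ) := by
        refine le_trans (hsplit x) ?_
        rw [← h2]
        exact add_le_add_left hcon _
      exact absurd hx (not_lt.2 hFle)
    calc σ {x | (2:ℝ≥0∞) ^ (k:ℝ) < F x}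
        ≤ σ {x | (2:ℝ≥0∞) ^ ((k:ℝ) - 1) < maxF σ (hcut k) x} := measure_mono hsubset
      _ ≤ _ := weak_type σ (hcut_meas k) (two_rpow_ne_zero _) (two_rpow_ne_top _)
  calc ∫⁻ x, F x ^ r ∂σ
      ≤ (2:ℝ≥0∞) ^ r * ∑' k : ℤ, (2:ℝ≥0∞) ^ ((k:ℝ) * r) *
          σ {x | (2:ℝ≥0∞) ^ (k:ℝ) < F x} := step1
    _ ≤ (2:ℝ≥0∞) ^ r * ∑' k : ℤ, (2:ℝ≥0∞) ^ ((k:ℝ) * r) *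
          (((2:ℝ≥0∞) ^ ((k:ℝ) - 1))⁻¹ * ∫⁻ y, hcut k y ∂σ) := by
        gcongr with k
        exact step2 k
    _ = (2:ℝ≥0∞) ^ r * (2 * ∑' k : ℤ,
          (2:ℝ≥0∞) ^ ((k:ℝ) * (r-1)) * ∫⁻ y, hcut k y ∂σ) := by
        congr 1
        rw [← ENNReal.tsum_mul_left]
        refine tsum_congr fun k => ?_
        rw [← mul_assoc, ← mul_assoc]
        congr 1
        rw [← ENNReal.rpow_neg, ← ENNReal.rpow_add _ _ two_ne_zero ENNReal.ofNat_ne_top]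
        have he : (k:ℝ) * r + -((k:ℝ) - 1) = 1 + (k:ℝ) * (r-1) := by ring
        rw [he, ENNReal.rpow_add _ _ two_ne_zero ENNReal.ofNat_ne_top, ENNReal.rpow_one]
    _ = (2:ℝ≥0∞) ^ r * (2 * ∫⁻ y, (∑' k : ℤ,
          (if (2:ℝ≥0∞) ^ ((k:ℝ) - 1) < h y then (2:ℝ≥0∞) ^ ((k:ℝ) * (r-1)) else 0))
          * h y ∂σ) := by
        congr 2
        calc ∑' k : ℤ, (2:ℝ≥0∞) ^ ((k:ℝ) * (r-1)) * ∫⁻ y, hcut k y ∂σ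
            = ∑' k : ℤ, ∫⁻ y, (2:ℝ≥0∞) ^ ((k:ℝ) * (r-1)) * hcut k y ∂σ := by
              refine tsum_congr fun k => ?_
              rw [lintegral_const_mul _ (hcut_meas k)]
          _ = ∫⁻ y, ∑' k : ℤ, (2:ℝ≥0∞) ^ ((k:ℝ) * (r-1)) * hcut k y ∂σ :=
              (lintegral_tsum fun k => (measurable_const.mul (hcut_meas k)).aemeasurable).symm
          _ = ∫⁻ y, (∑' k : ℤ, (if (2:ℝ≥0∞) ^ ((k:ℝ) - 1) < h y
                then (2:ℝ≥0∞) ^ ((k:ℝ) * (r-1)) else 0)) * h y ∂σ := by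
              refine lintegral_congr fun y => ?_
              rw [← ENNReal.tsum_mul_right]
              refine tsum_congr fun k => ?_
              rw [hcut_def]
              by_cases hy : (2:ℝ≥0∞) ^ ((k:ℝ) - 1) < h y
              · simp only [Set.indicator_apply, Set.mem_setOf_eq, if_pos hy]
              · simp only [Set.indicator_apply, Set.mem_setOf_eq, if_neg hy,
                  mul_zero, zero_mul]
    _ ≤ (2:ℝ≥0∞) ^ r * (2 * ∫⁻ y,
          ((1 - (2:ℝ≥0∞) ^ (1-r))⁻¹ * (2 * h y) ^ (r-1)) * h y ∂σ) := by
        gcongr with y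
        exact geom_tail hr (h y)
    _ = (2:ℝ≥0∞) ^ r * 2 * ((1 - (2:ℝ≥0∞) ^ (1-r))⁻¹ * (2:ℝ≥0∞) ^ (r-1)) *
          ∫⁻ x, h x ^ r ∂σ := by
        have hpt : ∀ y : ℝ≥0∞, ((1 - (2:ℝ≥0∞) ^ (1-r))⁻¹ * (2 * y) ^ (r-1)) * y
            = ((1 - (2:ℝ≥0∞) ^ (1-r))⁻¹ * (2:ℝ≥0∞) ^ (r-1)) * y ^ r := by
          intro y
          rw [ENNReal.mul_rpow_of_nonneg _ _ hr1]
          have : y ^ r = y ^ (r-1) * y := by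
            calc y ^ r = y ^ ((r-1) + 1) := by congr 1; ring
              _ = y ^ (r-1) * y ^ (1:ℝ) := ENNReal.rpow_add_of_nonneg _ _ hr1 one_pos.le
              _ = y ^ (r-1) * y := by rw [ENNReal.rpow_one]
          rw [this]
          ring
        simp_rw [hpt]
        rw [lintegral_const_mul _ (hh.pow_const r)]
        ring

lemma iSup_min_nat (a : ℝ≥0∞) : ⨆ N : ℕ, min a (N:ℝ≥0∞) = a := by
  refine le_antisymm (iSup_le fun N => min_le_left _ _) ?_
  rcases eq_or_ne a ∞ with rfl | ha
  · calc (⊤:ℝ≥0∞) = ⨆ N : ℕ, (N:ℝ≥0∞) := ENNReal.iSup_natCast.symm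
      _ ≤ ⨆ N : ℕ, min ⊤ (N:ℝ≥0∞) := by
          refine iSup_mono fun N => le_of_eq (min_eq_right le_top).symm
  · obtain ⟨N, hN⟩ := ENNReal.exists_nat_gt ha
    exact le_iSup_of_le N (min_eq_left hN.le).ge

theorem necessity (σ μ : Measure (Fin n → ℝ))
    [IsLocallyFiniteMeasure σ] [IsLocallyFiniteMeasure μ]
    (lam : Set (Fin n → ℝ) → ℝ≥0∞)
    (p q : ℝ) (hq : 1 < q) (hqp : q < p)
    (H : ∃ C : ℝ≥0∞, C ≠ ∞ ∧ ∀ f : (Fin n → ℝ) → ℝ≥0∞, Measurable f →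
      (∫⁻ x, (∑' Q : Cubes n,
          Set.indicator Q.1 (fun _ => lam Q.1 ^ q * (∫⁻ y in Q.1, f y ∂σ) ^ q) x) ∂μ) ^ (1 / q)
        ≤ C * (∫⁻ x, f x ^ p ∂σ) ^ (1 / p)) :
    (∫⁻ x, (∑' Q : Cubes n,
        Set.indicator Q.1 (fun _ => lam Q.1 ^ q * σ Q.1 ^ (q - 1) * μ Q.1) x)
          ^ (p / (p - q)) ∂σ) ≠ ∞ := by
  classical
  obtain ⟨C, hC, hO⟩ := H
  have hq0 : (0:ℝ) < q := lt_trans one_pos hq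
  have hp0 : (0:ℝ) < p := lt_trans hq0 hqp
  have hpq0 : (0:ℝ) < p - q := by linarith
  set r : ℝ := p / q with hr_def
  set r' : ℝ := p / (p - q) with hr'_def
  have hr1 : 1 < r := (one_lt_div hq0).2 hqp
  have hr0 : (0:ℝ) < r := lt_trans one_pos hr1
  have hr'0 : (0:ℝ) < r' := div_pos hp0 hpq0
  have hr'1 : (1:ℝ) < r' := (one_lt_div hpq0).2 (by linarith)
  have hsum : 1/r' + 1/r = 1 := by
    rw [hr_def, hr'_def, one_div_div, one_div_div]
    field_simp
    ring
  have hr'r : (r' - 1) * r = r' := by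
    rw [hr_def, hr'_def]
    field_simp
    ring
  set Kr : ℝ≥0∞ :=
    (2:ℝ≥0∞) ^ r * 2 * ((1 - (2:ℝ≥0∞) ^ (1-r))⁻¹ * (2:ℝ≥0∞) ^ (r-1)) with hKr_def
  have hKr_top : Kr ≠ ∞ := by
    have h1 : (2:ℝ≥0∞) ^ (1-r) < 1 := by
      calc (2:ℝ≥0∞) ^ (1-r) < 2 ^ (0:ℝ) :=
            ENNReal.rpow_lt_rpow_of_exponent_lt one_lt_two ENNReal.ofNat_ne_top (by linarith)
        _ = 1 := ENNReal.rpow_zero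
    have h2 : (1 - (2:ℝ≥0∞) ^ (1-r))⁻¹ ≠ ∞ :=
      ENNReal.inv_ne_top.2 (tsub_pos_of_lt h1).ne'
    rw [hKr_def]
    exact ENNReal.mul_ne_top
      (ENNReal.mul_ne_top (two_rpow_ne_top r) ENNReal.ofNat_ne_top)
      (ENNReal.mul_ne_top h2 (two_rpow_ne_top _))
  set c : Cubes n → ℝ≥0∞ := fun Q => lam Q.1 ^ q * σ Q.1 ^ (q - 1) * μ Q.1 with hc_def
  set G : (Fin n → ℝ) → ℝ≥0∞ :=
    fun x => ∑' Q : Cubes n, Set.indicator Q.1 (fun _ => c Q) x with hG_def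
  have hG : Measurable G := measurable_tsum_indicator c
  set K : ℝ≥0∞ := C ^ q * Kr ^ (1/r) with hK_def
  have hK_top : K ≠ ∞ := ENNReal.mul_ne_top
    (ENNReal.rpow_ne_top_of_nonneg hq0.le hC)
    (ENNReal.rpow_ne_top_of_nonneg (by positivity) hKr_top)
  -- the main duality inequality
  have main : ∀ h : (Fin n → ℝ) → ℝ≥0∞, Measurable h →
      ∫⁻ x, G x * h x ∂σ ≤ K * (∫⁻ x, h x ^ r ∂σ) ^ (1/r) := by
    intro h hh
    set f : (Fin n → ℝ) → ℝ≥0∞ := fun x => maxF σ h x ^ (1/q) with hf_def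
    have hf : Measurable f := (measurable_maxF σ h).pow_const _
    have cube_bd : ∀ Q : Cubes n,
        σ Q.1 ^ (q-1) * ∫⁻ y in Q.1, h y ∂σ ≤ (∫⁻ y in Q.1, f y ∂σ) ^ q := by
      intro Q
      rcases eq_or_ne (σ Q.1) 0 with h0 | h0
      · rw [h0, ENNReal.zero_rpow_of_pos (by linarith), zero_mul]
        exact zero_le
      have htop : σ Q.1 ≠ ∞ := (measure_cube_lt_top σ Q.2).ne
      set I : ℝ≥0∞ := ∫⁻ y in Q.1, h y ∂σ with hI_def
      set v : ℝ≥0∞ := (σ Q.1)⁻¹ * I with hv_def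
      have hpt : ∀ y ∈ Q.1, v ^ (1/q) ≤ f y := by
        intro y hy
        exact ENNReal.rpow_le_rpow (cube_avg_le_maxF σ Q.2 h hy) (by positivity)
      have hint : v ^ (1/q) * σ Q.1 ≤ ∫⁻ y in Q.1, f y ∂σ := by
        calc v ^ (1/q) * σ Q.1 = ∫⁻ _ in Q.1, v ^ (1/q) ∂σ := (setLIntegral_const _ _).symm
          _ ≤ ∫⁻ y in Q.1, f y ∂σ := setLIntegral_mono hf hpt
      calc σ Q.1 ^ (q-1) * I
          = (v ^ (1/q) * σ Q.1) ^ q := by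
            rw [ENNReal.mul_rpow_of_nonneg _ _ hq0.le, ← ENNReal.rpow_mul,
              one_div_mul_cancel hq0.ne', ENNReal.rpow_one, hv_def]
            calc σ Q.1 ^ (q-1) * I = (σ Q.1 ^ (q-1) * (σ Q.1 * (σ Q.1)⁻¹)) * I := by
                  rw [ENNReal.mul_inv_cancel h0 htop, mul_one]
              _ = (σ Q.1)⁻¹ * I * (σ Q.1 ^ (q-1) * σ Q.1 ^ (1:ℝ)) := by
                  rw [ENNReal.rpow_one]; ring
              _ = (σ Q.1)⁻¹ * I * σ Q.1 ^ q := by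
                  rw [← ENNReal.rpow_add _ _ h0 htop]
                  norm_num
        _ ≤ (∫⁻ y in Q.1, f y ∂σ) ^ q := ENNReal.rpow_le_rpow hint hq0.le
    have happl : (∫⁻ x, (∑' Q : Cubes n,
        Set.indicator Q.1 (fun _ => lam Q.1 ^ q * (∫⁻ y in Q.1, f y ∂σ) ^ q) x) ∂μ)
        ≤ (C * (∫⁻ x, f x ^ p ∂σ) ^ (1/p)) ^ q := by
      have h1 := hO f hf
      have h2 := ENNReal.rpow_le_rpow h1 hq0.le
      rwa [← ENNReal.rpow_mul, one_div_mul_cancel hq0.ne', ENNReal.rpow_one] at h2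
    have hfp : ∫⁻ x, f x ^ p ∂σ = ∫⁻ x, maxF σ h x ^ r ∂σ := by
      refine lintegral_congr fun x => ?_
      rw [hf_def, ← ENNReal.rpow_mul]
      congr 1
      rw [hr_def]
      field_simp
    calc ∫⁻ x, G x * h x ∂σ
        = ∑' Q : Cubes n, c Q * ∫⁻ y in Q.1, h y ∂σ :=
          lintegral_tsum_indicator_mul σ c hh
      _ ≤ ∑' Q : Cubes n, lam Q.1 ^ q * (∫⁻ y in Q.1, f y ∂σ) ^ q * μ Q.1 := by
          refine ENNReal.tsum_le_tsum fun Q => ?_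
          rw [hc_def]
          calc lam Q.1 ^ q * σ Q.1 ^ (q-1) * μ Q.1 * ∫⁻ y in Q.1, h y ∂σ
              = lam Q.1 ^ q * (σ Q.1 ^ (q-1) * ∫⁻ y in Q.1, h y ∂σ) * μ Q.1 := by ring
            _ ≤ lam Q.1 ^ q * (∫⁻ y in Q.1, f y ∂σ) ^ q * μ Q.1 := by
                gcongr
                exact cube_bd Q
      _ = ∫⁻ x, (∑' Q : Cubes n,
            Set.indicator Q.1 (fun _ => lam Q.1 ^ q * (∫⁻ y in Q.1, f y ∂σ) ^ q) x) ∂μ :=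
          (lintegral_tsum_indicator μ _).symm
      _ ≤ (C * (∫⁻ x, f x ^ p ∂σ) ^ (1/p)) ^ q := happl
      _ = C ^ q * (∫⁻ x, maxF σ h x ^ r ∂σ) ^ (1/r) := by
          rw [ENNReal.mul_rpow_of_nonneg _ _ hq0.le, ← ENNReal.rpow_mul, hfp]
          congr 2
          rw [hr_def]
          field_simp
      _ ≤ C ^ q * (Kr * ∫⁻ x, h x ^ r ∂σ) ^ (1/r) := by
          gcongr
          exact strong_type σ hr1 hh
      _ = K * (∫⁻ x, h x ^ r ∂σ) ^ (1/r) := by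
          rw [ENNReal.mul_rpow_of_nonneg _ _ (by positivity), hK_def, mul_assoc]
  -- truncation and duality
  set GN : ℕ → (Fin n → ℝ) → ℝ≥0∞ := fun N =>
    (Metric.ball (0 : Fin n → ℝ) N).indicator (fun y => min (G y) N) with hGN_def
  have hGNmeas : ∀ N, Measurable (GN N) := fun N =>
    (hG.min measurable_const).indicator measurableSet_ball
  have hGNle : ∀ N x, GN N x ≤ G x := by
    intro N x
    simp only [hGN_def]
    by_cases hx : x ∈ Metric.ball (0 : Fin n → ℝ) N
    · rw [Set.indicator_of_mem hx]; exact min_le_left _ _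
    · rw [Set.indicator_of_notMem hx]; exact zero_le
  have hGNmono : ∀ x, Monotone (fun N => GN N x) := by
    intro x N M hNM
    simp only [hGN_def]
    by_cases hx : x ∈ Metric.ball (0 : Fin n → ℝ) N
    · have hx' : x ∈ Metric.ball (0 : Fin n → ℝ) M :=
        Metric.ball_subset_ball (by exact_mod_cast hNM) hx
      simp only [Set.indicator_of_mem hx, Set.indicator_of_mem hx']
      exact min_le_min le_rfl (by exact_mod_cast hNM)
    · simp only [Set.indicator_of_notMem hx]
      exact zero_le
  have hGNsup : ∀ x, ⨆ N : ℕ, GN N x = G x := by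
    intro x
    refine le_antisymm (iSup_le fun N => hGNle N x) ?_
    obtain ⟨N₀, hN₀⟩ := exists_nat_gt (dist x (0 : Fin n → ℝ))
    calc G x = ⨆ N : ℕ, min (G x) (N:ℝ≥0∞) := (iSup_min_nat (G x)).symm
      _ ≤ ⨆ N : ℕ, GN N x := by
          refine iSup_le fun N => le_iSup_of_le (N + N₀) ?_
          have hx : x ∈ Metric.ball (0 : Fin n → ℝ) (N + N₀ : ℕ) := by
            rw [Metric.mem_ball]
            push_cast
            linarith
          simp only [hGN_def]
          simp only [Set.indicator_of_mem hx]
          refine min_le_min le_rfl ?_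
          exact_mod_cast Nat.le_add_right N N₀
  set A : ℕ → ℝ≥0∞ := fun N => ∫⁻ x, GN N x ^ r' ∂σ with hA_def
  have hAtot : ∫⁻ x, G x ^ r' ∂σ = ⨆ N, A N := by
    rw [hA_def]
    rw [← lintegral_iSup (fun N => (hGNmeas N).pow_const r')
      (fun N M hNM x => ENNReal.rpow_le_rpow (hGNmono x hNM) hr'0.le)]
    refine lintegral_congr fun x => ?_
    rw [← hGNsup x]
    have hiso := ((ENNReal.orderIsoRpow r' hr'0).map_iSup (fun N => GN N x)).symm
    simp only [ENNReal.orderIsoRpow_apply] at hiso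
    exact hiso.symm
  have hAbd : ∀ N, A N ≤ K ^ r' := by
    intro N
    have hAN_top : A N ≠ ∞ := by
      have hle : A N ≤ (N:ℝ≥0∞) ^ r' * σ (Metric.ball (0 : Fin n → ℝ) N) := by
        rw [hA_def]
        calc ∫⁻ x, GN N x ^ r' ∂σ
            ≤ ∫⁻ x, (Metric.ball (0 : Fin n → ℝ) N).indicator
                (fun _ => (N:ℝ≥0∞) ^ r') x ∂σ := by
              refine lintegral_mono fun x => ?_
              simp only [hGN_def]
              by_cases hx : x ∈ Metric.ball (0 : Fin n → ℝ) N
              · simp only [Set.indicator_of_mem hx]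
                exact ENNReal.rpow_le_rpow (min_le_right _ _) hr'0.le
              · simp only [Set.indicator_of_notMem hx]
                rw [ENNReal.zero_rpow_of_pos hr'0]
          _ = (N:ℝ≥0∞) ^ r' * σ (Metric.ball (0 : Fin n → ℝ) N) := by
              rw [lintegral_indicator measurableSet_ball, setLIntegral_const]
      exact (hle.trans_lt (ENNReal.mul_lt_top
        (ENNReal.rpow_lt_top_of_nonneg hr'0.le (by simp))
        measure_ball_lt_top)).ne
    set h : (Fin n → ℝ) → ℝ≥0∞ := fun x => GN N x ^ (r' - 1) with hh_def
    have hh : Measurable h := (hGNmeas N).pow_const _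
    have hhr : ∫⁻ x, h x ^ r ∂σ = A N := by
      rw [hA_def]
      refine lintegral_congr fun x => ?_
      rw [hh_def, ← ENNReal.rpow_mul, hr'r]
    have hlow : A N ≤ ∫⁻ x, G x * h x ∂σ := by
      rw [hA_def]
      refine lintegral_mono fun x => ?_
      calc GN N x ^ r' = GN N x ^ (1 + (r' - 1)) := by congr 1; ring
        _ = GN N x ^ (1:ℝ) * GN N x ^ (r' - 1) :=
            ENNReal.rpow_add_of_nonneg _ _ one_pos.le (by linarith)
        _ = GN N x * h x := by rw [ENNReal.rpow_one, hh_def]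
        _ ≤ G x * h x := mul_le_mul_left (hGNle N x) _
    have hup : A N ≤ K * A N ^ (1/r) := by
      calc A N ≤ ∫⁻ x, G x * h x ∂σ := hlow
        _ ≤ K * (∫⁻ x, h x ^ r ∂σ) ^ (1/r) := main h hh
        _ = K * A N ^ (1/r) := by rw [hhr]
    rcases eq_or_ne (A N) 0 with h0 | h0
    · rw [h0]; exact zero_le
    have h1 : A N ^ (1/r) ≠ 0 := by
      simp only [ne_eq, ENNReal.rpow_eq_zero_iff, not_or]
      constructor
      · rintro ⟨h, _⟩; exact h0 h
      · rintro ⟨h, _⟩; exact hAN_top h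
    have h2 : A N ^ (1/r) ≠ ∞ := ENNReal.rpow_ne_top_of_nonneg (by positivity) hAN_top
    have h3 : A N ^ (1/r') * A N ^ (1/r) ≤ K * A N ^ (1/r) := by
      calc A N ^ (1/r') * A N ^ (1/r)
          = A N ^ (1/r' + 1/r) := (ENNReal.rpow_add _ _ h0 hAN_top).symm
        _ = A N := by rw [hsum, ENNReal.rpow_one]
        _ ≤ K * A N ^ (1/r) := hup
    have h4 : A N ^ (1/r') ≤ K := (ENNReal.mul_le_mul_iff_left h1 h2).1 h3
    calc A N = (A N ^ (1/r')) ^ r' := by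
          rw [← ENNReal.rpow_mul, one_div_mul_cancel hr'0.ne', ENNReal.rpow_one]
      _ ≤ K ^ r' := ENNReal.rpow_le_rpow h4 hr'0.le
  rw [show (∫⁻ x, (∑' Q : Cubes n,
      Set.indicator Q.1 (fun _ => lam Q.1 ^ q * σ Q.1 ^ (q - 1) * μ Q.1) x)
        ^ (p / (p - q)) ∂σ) = ∫⁻ x, G x ^ r' ∂σ from rfl]
  rw [hAtot]
  exact ne_top_of_le_ne_top (ENNReal.rpow_ne_top_of_nonneg hr'0.le hK_top)
    (iSup_le hAbd)
end Dyad

theorem s_eq_q_characterization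
    {n : ℕ} (σ μ : Measure (Fin n → ℝ))
    [IsLocallyFiniteMeasure σ] [IsLocallyFiniteMeasure μ]
    (lam : Set (Fin n → ℝ) → ℝ≥0∞)
    (p q : ℝ) (hq : 1 < q) (hqp : q < p) :
    (∃ C : ℝ≥0∞, C ≠ ∞ ∧ ∀ f : (Fin n → ℝ) → ℝ≥0∞, Measurable f →
      (∫⁻ x, (∑' Q : {Q : Set (Fin n → ℝ) // IsDyadicCube Q},
          Set.indicator Q.1 (fun _ => lam Q.1 ^ q * (∫⁻ y in Q.1, f y ∂σ) ^ q) x) ∂μ) ^ (1 / q)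
        ≤ C * (∫⁻ x, f x ^ p ∂σ) ^ (1 / p))
    ↔ (∫⁻ x, (∑' Q : {Q : Set (Fin n → ℝ) // IsDyadicCube Q},
        Set.indicator Q.1 (fun _ => lam Q.1 ^ q * σ Q.1 ^ (q - 1) * μ Q.1) x)
          ^ (p / (p - q)) ∂σ) ≠ ∞ := by
  constructor
  · exact Dyad.necessity σ μ lam p q hq hqp
  · exact Dyad.sufficiency σ μ lam p q hq hqp
end
end
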